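/- arXiv:1910.02589 — 6 statements merged into one kernel-verified Lean document; each statement's English description precedes it below -/
import Mathlib

section
/- Let f₁, f₂ ∈ O_K[x] be distinct monic irreducible polynomials all of whose roots in K̄ have strictly positive valuation. If it is not the case that one of f₁, f₂ is Eisenstein and the other has degree 1, then ν_K(Res(f₁,f₂)) ≥ 2. -/
open Polynomial

/-- A monic polynomial `f = x^d + a_{d-1}x^{d-1} + ⋯ + a₀ ∈ O_K[x]` is *Eisenstein*
(with respect to the valuation `v` on an algebraic closure `Kbar` of `K`) if
`ν_K(a_i) ≥ 1` for all `i < d` and `ν_K(a₀) = 1`.  (The guard `coeff ≠ 0` reflects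
the convention `ν(0) = ∞ ≥ 1`.) -/
def IsEisensteinPoly {K Kbar : Type*} [Field K] [Field Kbar] [Algebra K Kbar]
    (v : Kbar → ℚ) (f : Polynomial K) : Prop :=
  f.Monic ∧
  (∀ i < f.natDegree, f.coeff i ≠ 0 → 1 ≤ v (algebraMap K Kbar (f.coeff i))) ∧
  f.coeff 0 ≠ 0 ∧ v (algebraMap K Kbar (f.coeff 0)) = 1

/-- The valuation of the resultant of two monic polynomials with no common root:
`ν_K(Res(f₁,f₂)) = Σ_{i,j} ν(α_i − β_j)` over the roots `α_i` of `f₁` and `β_j`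
of `f₂` in `Kbar` (with multiplicity). -/
noncomputable def resultantVal {K Kbar : Type*} [Field K] [Field Kbar] [Algebra K Kbar]
    (v : Kbar → ℚ) (f₁ f₂ : Polynomial K) : ℚ :=
  (((f₁.map (algebraMap K Kbar)).roots).map (fun α =>
    (((f₂.map (algebraMap K Kbar)).roots).map (fun β => v (α - β))).sum)).sum

set_option linter.unusedSectionVars false
section VAux
variable {Kbar : Type*} [Field Kbar] (v : Kbar → ℚ)
  (hv_mul : ∀ x y : Kbar, x ≠ 0 → y ≠ 0 → v (x * y) = v x + v y)
include hv_mul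
lemma v_one_aux : v 1 = 0 := by
  have := hv_mul 1 1 one_ne_zero one_ne_zero
  simp only [mul_one] at this; linarith
lemma v_neg_aux (x : Kbar) (hx : x ≠ 0) : v (-x) = v x := by
  have h1 := hv_mul (-1) (-1) (by norm_num) (by norm_num)
  have h0 : v (-1 : Kbar) = 0 := by
    simp only [neg_mul, one_mul, neg_neg] at h1
    have := v_one_aux v hv_mul; linarith
  have h2 := hv_mul (-1) x (by norm_num) hx
  rw [neg_one_mul] at h2; rw [h2, h0]; ring
lemma v_prod_aux (s : Multiset Kbar) (hs : ∀ x ∈ s, x ≠ 0) :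
    v s.prod = (s.map v).sum := by
  induction s using Multiset.induction with
  | empty => simpa using v_one_aux v hv_mul
  | cons a t ih =>
    have ha : a ≠ 0 := hs a (Multiset.mem_cons_self a t)
    have ht : ∀ x ∈ t, x ≠ 0 := fun x hx => hs x (Multiset.mem_cons_of_mem hx)
    have hp : t.prod ≠ 0 := Multiset.prod_ne_zero (fun h => (ht 0 h) rfl)
    rw [Multiset.prod_cons, hv_mul a t.prod ha hp, ih ht, Multiset.map_cons,
      Multiset.sum_cons]
variable (hv_add : ∀ x y : Kbar, x ≠ 0 → y ≠ 0 → x + y ≠ 0 → min (v x) (v y) ≤ v (x + y))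
include hv_add
lemma v_sum_aux (c : ℚ) (s : Multiset Kbar)
    (hs : ∀ x ∈ s, x ≠ 0 → c ≤ v x) (h0 : s.sum ≠ 0) : c ≤ v s.sum := by
  induction s using Multiset.induction with
  | empty => simp at h0
  | cons a t ih =>
    rw [Multiset.sum_cons] at h0 ⊢
    have ht' : ∀ x ∈ t, x ≠ 0 → c ≤ v x := fun x hx => hs x (Multiset.mem_cons_of_mem hx)
    by_cases ha : a = 0
    · rw [ha, zero_add] at h0 ⊢; exact ih ht' h0
    by_cases htz : t.sum = 0
    · rw [htz, add_zero] at h0 ⊢; exact hs a (Multiset.mem_cons_self a t) ha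
    · refine le_trans (le_min (hs a (Multiset.mem_cons_self a t) ha) (ih ht' htz))
        (hv_add a t.sum ha htz h0)
end VAux

section PF
variable {K Kbar : Type*} [Field K] [Field Kbar] [Algebra K Kbar] [IsAlgClosure K Kbar]

-- root membership gives aeval zero
lemma aeval_zero_of_mem_roots (f : Polynomial K) (hf : f ≠ 0) {α : Kbar}
    (hα : α ∈ (f.map (algebraMap K Kbar)).roots) : Polynomial.aeval α f = 0 := by
  have h := (Polynomial.mem_roots'.1 hα).2
  rwa [Polynomial.IsRoot, Polynomial.eval_map, ← Polynomial.aeval_def] at h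

lemma minpoly_eq_self (f : Polynomial K) (hmon : f.Monic) (hirr : Irreducible f) {α : Kbar}
    (hα : α ∈ (f.map (algebraMap K Kbar)).roots) : minpoly K α = f :=
  (minpoly.eq_of_irreducible_of_monic hirr (aeval_zero_of_mem_roots f hirr.ne_zero hα) hmon).symm

lemma poly_facts (v : Kbar → ℚ)
    (hv_mul : ∀ x y : Kbar, x ≠ 0 → y ≠ 0 → v (x * y) = v x + v y)
    (hv_add : ∀ x y : Kbar, x ≠ 0 → y ≠ 0 → x + y ≠ 0 → min (v x) (v y) ≤ v (x + y))
    (hv_gal : ∀ (σ : Kbar ≃ₐ[K] Kbar) (x : Kbar), v (σ x) = v x)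
    (hv_int : ∀ x : K, x ≠ 0 → ∃ n : ℤ, v (algebraMap K Kbar x) = (n : ℚ))
    (f : Polynomial K) (hmon : f.Monic) (hirr : Irreducible f) (hfX : f ≠ X)
    (hcoeff : ∀ n, f.coeff n ≠ 0 → 0 ≤ v (algebraMap K Kbar (f.coeff n)))
    (hpos : ∀ α ∈ (f.map (algebraMap K Kbar)).roots, 0 < v α) :
    ∃ r : ℚ, 0 < r ∧ (∀ α ∈ (f.map (algebraMap K Kbar)).roots, α ≠ 0 ∧ v α = r) ∧
      ∃ n : ℤ, (f.natDegree : ℚ) * r = (n : ℚ) ∧ 1 ≤ n ∧ (n = 1 → IsEisensteinPoly v f) := by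
  haveI : IsAlgClosed Kbar := IsAlgClosure.isAlgClosed K
  set φ := algebraMap K Kbar
  set F := f.map φ with hF
  have hFmon : F.Monic := hmon.map φ
  have hsplit : Splits F := IsAlgClosed.splits F
  have hcard : Multiset.card F.roots = f.natDegree := hsplit.natDegree_eq_card_roots.symm.trans (hmon.natDegree_map φ)
  have hdpos : 0 < f.natDegree := hirr.natDegree_pos
  -- roots are nonzero
  have hne0 : ∀ α ∈ F.roots, α ≠ 0 := by
    intro α hα h0
    apply hfX
    rw [← minpoly_eq_self f hmon hirr hα, h0, minpoly.zero]
  -- all roots have the same valuation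
  have hsame : ∀ α ∈ F.roots, ∀ α' ∈ F.roots, v α = v α' := by
    intro α hα α' hα'
    have h1 : Polynomial.aeval α' (minpoly K α) = 0 := by
      rw [minpoly_eq_self f hmon hirr hα]
      exact aeval_zero_of_mem_roots f hirr.ne_zero hα'
    have halg : IsAlgebraic K α := Algebra.IsAlgebraic.isAlgebraic α
    obtain ⟨σ, hσ⟩ := minpoly.exists_algEquiv_of_root halg h1
    rw [← hσ, hv_gal]
  -- pick a root
  obtain ⟨α₀, hα₀⟩ : ∃ α, α ∈ F.roots := by
    rw [← Multiset.card_pos_iff_exists_mem, hcard]; exact hdpos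
  refine ⟨v α₀, hpos α₀ hα₀, fun α hα => ⟨hne0 α hα, hsame α hα α₀ hα₀⟩, ?_⟩
  set r := v α₀
  -- sum of valuations of roots
  have hsum : (F.roots.map v).sum = (f.natDegree : ℚ) * r := by
    have : F.roots.map v = Multiset.replicate f.natDegree r := by
      rw [Multiset.eq_replicate]
      constructor
      · rw [Multiset.card_map, hcard]
      · intro b hb
        obtain ⟨α, hα, rfl⟩ := Multiset.mem_map.1 hb
        exact hsame α hα α₀ hα₀
    rw [this, Multiset.sum_replicate, nsmul_eq_mul]
  -- coeff 0
  have hsplitsId : Splits F := IsAlgClosed.splits F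
  have hc0 : F.coeff 0 = (-1) ^ F.natDegree * F.roots.prod :=
    hsplitsId.coeff_zero_eq_prod_roots_of_monic hFmon
  have hprodne : F.roots.prod ≠ 0 := Multiset.prod_ne_zero (fun h => hne0 0 h rfl)
  have hvsign : ∀ (d : ℕ) (x : Kbar), x ≠ 0 → v ((-1) ^ d * x) = v x := by
    intro d x hx
    rcases Nat.even_or_odd d with hd | hd
    · rw [hd.neg_one_pow, one_mul]
    · rw [hd.neg_one_pow, neg_one_mul, v_neg_aux v hv_mul x hx]
  have hFdeg : F.natDegree = f.natDegree := hmon.natDegree_map φ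
  have hvc0 : v (φ (f.coeff 0)) = (f.natDegree : ℚ) * r := by
    rw [← Polynomial.coeff_map, hc0, hvsign _ _ hprodne,
      v_prod_aux v hv_mul _ hne0, hsum]
  have hc0ne : f.coeff 0 ≠ 0 := by
    intro h
    apply hprodne
    have : F.coeff 0 = 0 := by simp only [hF, Polynomial.coeff_map, h, map_zero]
    rw [hc0] at this
    exact (mul_eq_zero.1 this).resolve_left (pow_ne_zero _ (by norm_num))
  obtain ⟨n, hn⟩ := hv_int (f.coeff 0) hc0ne
  refine ⟨n, by rw [← hvc0, hn], ?_, ?_⟩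
  · -- 1 ≤ n since n = d * r > 0
    have : (0 : ℚ) < n := by
      rw [← hn, hvc0]
      have hd : (0:ℚ) < f.natDegree := by exact_mod_cast hdpos
      exact mul_pos hd (hpos α₀ hα₀)
    exact_mod_cast this
  · -- n = 1 → Eisenstein
    intro hn1
    refine ⟨hmon, ?_, hc0ne, by rw [hn, hn1]; norm_num⟩
    intro i hi hci
    -- middle coefficients: valuation ≥ r > 0, and integral, so ≥ 1
    have hkey : r ≤ v (φ (f.coeff i)) := by
      have hci' : F.coeff i ≠ 0 := by
        rw [Polynomial.coeff_map]
        exact fun h => hci ((_root_.map_eq_zero φ).1 h)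
      have hvieta : F.coeff i = F.leadingCoeff * (-1) ^ (F.natDegree - i) *
          F.roots.esymm (F.natDegree - i) := by
        refine Polynomial.coeff_eq_esymm_roots_of_card ?_ ?_
        · rw [hcard, hFdeg]
        · rw [hFdeg]; omega
      rw [hFmon.leadingCoeff, one_mul] at hvieta
      have hesne : F.roots.esymm (F.natDegree - i) ≠ 0 := by
        intro h; apply hci'; rw [hvieta, h, mul_zero]
      have : v (F.coeff i) = v (F.roots.esymm (F.natDegree - i)) := by
        rw [hvieta, hvsign _ _ hesne]
      rw [Polynomial.coeff_map] at this
      rw [this]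
      refine v_sum_aux v hv_mul hv_add r _ ?_ hesne
      intro x hx hxne
      obtain ⟨t, ht, rfl⟩ := Multiset.mem_map.1 hx
      obtain ⟨hts, htc⟩ := (Multiset.mem_powersetCard).1 ht
      have htne : ∀ y ∈ t, y ≠ 0 := fun y hy => hne0 y (Multiset.mem_of_le hts hy)
      rw [v_prod_aux v hv_mul t htne]
      have hmap : t.map v = Multiset.replicate (Multiset.card t) r := by
        rw [Multiset.eq_replicate]
        exact ⟨Multiset.card_map _ _, fun b hb => by
          obtain ⟨y, hy, rfl⟩ := Multiset.mem_map.1 hb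
          exact hsame y (Multiset.mem_of_le hts hy) α₀ hα₀⟩
      rw [hmap, Multiset.sum_replicate, htc, nsmul_eq_mul]
      have h1le : 1 ≤ F.natDegree - i := by rw [hFdeg]; omega
      have : (1 : ℚ) ≤ (F.natDegree - i : ℕ) := by exact_mod_cast h1le
      nlinarith [hpos α₀ hα₀]
    obtain ⟨m, hm⟩ := hv_int (f.coeff i) hci
    rw [hm] at hkey ⊢
    have : (0:ℚ) < m := lt_of_lt_of_le (hpos α₀ hα₀) hkey
    exact_mod_cast (by exact_mod_cast this : (0:ℤ) < m)

end PF

/-- Let `K` be a field, Henselian with respect to a discrete valuation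
`ν_K` with algebraically closed residue field, with fixed algebraic closure `Kbar` and
(unique, Galois-invariant) extension `v` of `ν_K`, normalized so that a uniformizer
`πK` satisfies `v πK = 1` and `v` is `ℤ`-valued on `K`.
If `f₁, f₂ ∈ O_K[x]` are distinct monic irreducible polynomials all of whose roots
in `Kbar` have strictly positive valuation, and it is not the case that one of
`f₁, f₂` is Eisenstein and the other has degree `1`, then
`ν_K(Res(f₁,f₂)) ≥ 2`. -/
theorem resultant_val_ge_two
    {K Kbar : Type*} [Field K] [Field Kbar] [Algebra K Kbar] [IsAlgClosure K Kbar]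
    (v : Kbar → ℚ)
    (hv_mul : ∀ x y : Kbar, x ≠ 0 → y ≠ 0 → v (x * y) = v x + v y)
    (hv_add : ∀ x y : Kbar, x ≠ 0 → y ≠ 0 → x + y ≠ 0 → min (v x) (v y) ≤ v (x + y))
    (hv_gal : ∀ (σ : Kbar ≃ₐ[K] Kbar) (x : Kbar), v (σ x) = v x)
    (hv_int : ∀ x : K, x ≠ 0 → ∃ n : ℤ, v (algebraMap K Kbar x) = (n : ℚ))
    (πK : K) (hπK : πK ≠ 0 ∧ v (algebraMap K Kbar πK) = 1)
    (hv_res : ∀ x : Kbar, x ≠ 0 → 0 ≤ v x →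
      ∃ η : K, x = algebraMap K Kbar η ∨ 0 < v (x - algebraMap K Kbar η))
    (f₁ f₂ : Polynomial K)
    (hmon₁ : f₁.Monic) (hmon₂ : f₂.Monic)
    (hirr₁ : Irreducible f₁) (hirr₂ : Irreducible f₂)
    (hne : f₁ ≠ f₂)
    (hcoeff₁ : ∀ n, f₁.coeff n ≠ 0 → 0 ≤ v (algebraMap K Kbar (f₁.coeff n)))
    (hcoeff₂ : ∀ n, f₂.coeff n ≠ 0 → 0 ≤ v (algebraMap K Kbar (f₂.coeff n)))
    (hpos₁ : ∀ α ∈ (f₁.map (algebraMap K Kbar)).roots, 0 < v α)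
    (hpos₂ : ∀ β ∈ (f₂.map (algebraMap K Kbar)).roots, 0 < v β)
    (hnotEis : ¬ ((IsEisensteinPoly v f₁ ∧ f₂.natDegree = 1) ∨
                  (IsEisensteinPoly v f₂ ∧ f₁.natDegree = 1))) :
    2 ≤ resultantVal v f₁ f₂ := by
  haveI : IsAlgClosed Kbar := IsAlgClosure.isAlgClosed K
  push_neg at hnotEis
  obtain ⟨hnE₁, hnE₂⟩ := hnotEis
  set φ := algebraMap K Kbar with hφ
  have hcard₁ : Multiset.card (f₁.map φ).roots = f₁.natDegree :=
    (IsAlgClosed.splits (f₁.map φ)).natDegree_eq_card_roots.symm.trans (hmon₁.natDegree_map φ)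
  have hcard₂ : Multiset.card (f₂.map φ).roots = f₂.natDegree :=
    (IsAlgClosed.splits (f₂.map φ)).natDegree_eq_card_roots.symm.trans (hmon₂.natDegree_map φ)
  by_cases h1X : f₁ = X
  · -- f₁ = X, so the resultant valuation is the sum of root valuations of f₂
    have hf2X : f₂ ≠ X := fun h => hne (h1X.trans h.symm)
    obtain ⟨r₂, hr₂pos, hroots₂, n₂, hn₂, hn₂1, hEis₂⟩ :=
      poly_facts v hv_mul hv_add hv_gal hv_int f₂ hmon₂ hirr₂ hf2X hcoeff₂ hpos₂
    have hd1 : f₁.natDegree = 1 := by rw [h1X, Polynomial.natDegree_X]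
    have hn₂ne1 : n₂ ≠ 1 := by
      intro h
      exact (hnE₂ (hEis₂ h) hd1).elim
    have hn₂2 : (2:ℚ) ≤ (n₂ : ℚ) := by exact_mod_cast (by omega : (2:ℤ) ≤ n₂)
    have hrep : (f₂.map φ).roots.map (fun β => v ((0:Kbar) - β)) =
        Multiset.replicate f₂.natDegree r₂ := by
      rw [Multiset.eq_replicate]
      refine ⟨by rw [Multiset.card_map, hcard₂], ?_⟩
      intro b hb
      obtain ⟨β, hβ, rfl⟩ := Multiset.mem_map.1 hb
      obtain ⟨hβ0, hβv⟩ := hroots₂ β hβ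
      rw [zero_sub, v_neg_aux v hv_mul β hβ0, hβv]
    have : resultantVal v f₁ f₂ = (f₂.natDegree : ℚ) * r₂ := by
      unfold resultantVal
      rw [← hφ, h1X]
      simp only [Polynomial.map_X, Polynomial.roots_X, Multiset.map_singleton,
        Multiset.sum_singleton]
      rw [hrep, Multiset.sum_replicate, nsmul_eq_mul]
    rw [this, hn₂]
    exact hn₂2
  by_cases h2X : f₂ = X
  · have hf1X : f₁ ≠ X := h1X
    obtain ⟨r₁, hr₁pos, hroots₁, n₁, hn₁, hn₁1, hEis₁⟩ :=
      poly_facts v hv_mul hv_add hv_gal hv_int f₁ hmon₁ hirr₁ hf1X hcoeff₁ hpos₁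
    have hd2 : f₂.natDegree = 1 := by rw [h2X, Polynomial.natDegree_X]
    have hn₁ne1 : n₁ ≠ 1 := fun h => (hnE₁ (hEis₁ h) hd2).elim
    have hn₁2 : (2:ℚ) ≤ (n₁ : ℚ) := by exact_mod_cast (by omega : (2:ℤ) ≤ n₁)
    have hrep : (f₁.map φ).roots.map (fun α => v (α - (0:Kbar))) =
        Multiset.replicate f₁.natDegree r₁ := by
      rw [Multiset.eq_replicate]
      refine ⟨by rw [Multiset.card_map, hcard₁], ?_⟩
      intro b hb
      obtain ⟨α, hα, rfl⟩ := Multiset.mem_map.1 hb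
      obtain ⟨hα0, hαv⟩ := hroots₁ α hα
      rw [sub_zero, hαv]
    have : resultantVal v f₁ f₂ = (f₁.natDegree : ℚ) * r₁ := by
      unfold resultantVal
      rw [← hφ, h2X]
      simp only [Polynomial.map_X, Polynomial.roots_X, Multiset.map_singleton,
        Multiset.sum_singleton]
      rw [hrep, Multiset.sum_replicate, nsmul_eq_mul]
    rw [this, hn₁]
    exact hn₁2
  · -- generic case: both f₁ ≠ X and f₂ ≠ X
    obtain ⟨r₁, hr₁pos, hroots₁, n₁, hn₁, hn₁1, hEis₁⟩ :=
      poly_facts v hv_mul hv_add hv_gal hv_int f₁ hmon₁ hirr₁ h1X hcoeff₁ hpos₁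
    obtain ⟨r₂, hr₂pos, hroots₂, n₂, hn₂, hn₂1, hEis₂⟩ :=
      poly_facts v hv_mul hv_add hv_gal hv_int f₂ hmon₂ hirr₂ h2X hcoeff₂ hpos₂
    set m := min r₁ r₂ with hm
    have hnocommon : ∀ α ∈ (f₁.map φ).roots, ∀ β ∈ (f₂.map φ).roots, α ≠ β := by
      intro α hα β hβ h
      apply hne
      rw [← minpoly_eq_self f₁ hmon₁ hirr₁ hα, h, minpoly_eq_self f₂ hmon₂ hirr₂ hβ]
    -- inner bound
    have hinner : ∀ α ∈ (f₁.map φ).roots,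
        (f₂.natDegree : ℚ) * m ≤ ((f₂.map φ).roots.map (fun β => v (α - β))).sum := by
      intro α hα
      have h1 := Multiset.card_nsmul_le_sum
        (s := (f₂.map φ).roots.map (fun β => v (α - β))) (a := m) ?_
      · rwa [Multiset.card_map, hcard₂, nsmul_eq_mul] at h1
      · intro x hx
        obtain ⟨β, hβ, rfl⟩ := Multiset.mem_map.1 hx
        obtain ⟨hα0, hαv⟩ := hroots₁ α hα
        obtain ⟨hβ0, hβv⟩ := hroots₂ β hβ
        have hαβ : α - β ≠ 0 := sub_ne_zero.2 (hnocommon α hα β hβ)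
        have hnb : -β ≠ 0 := neg_ne_zero.2 hβ0
        have := hv_add α (-β) hα0 hnb (by rwa [← sub_eq_add_neg])
        rw [← sub_eq_add_neg, v_neg_aux v hv_mul β hβ0, hαv, hβv] at this
        exact this
    -- outer bound
    have houter : (f₁.natDegree : ℚ) * ((f₂.natDegree : ℚ) * m) ≤ resultantVal v f₁ f₂ := by
      have h1 := Multiset.card_nsmul_le_sum
        (s := (f₁.map φ).roots.map (fun α => ((f₂.map φ).roots.map (fun β => v (α - β))).sum))
        (a := (f₂.natDegree : ℚ) * m) ?_
      · rw [Multiset.card_map, hcard₁, nsmul_eq_mul] at h1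
        exact h1
      · intro x hx
        obtain ⟨α, hα, rfl⟩ := Multiset.mem_map.1 hx
        exact hinner α hα
    refine le_trans ?_ houter
    -- now pure arithmetic
    have hd₁pos : 0 < f₁.natDegree := hirr₁.natDegree_pos
    have hd₂pos : 0 < f₂.natDegree := hirr₂.natDegree_pos
    have hn₁' : (1:ℚ) ≤ (n₁:ℚ) := by exact_mod_cast hn₁1
    have hn₂' : (1:ℚ) ≤ (n₂:ℚ) := by exact_mod_cast hn₂1
    rcases le_total r₁ r₂ with hr | hr
    · have hmeq : m = r₁ := min_eq_left hr
      have key : (2:ℚ) ≤ (f₂.natDegree : ℚ) * (n₁ : ℚ) := by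
        by_cases hd2 : f₂.natDegree = 1
        · have hn₁ne1 : n₁ ≠ 1 := fun h => (hnE₁ (hEis₁ h) hd2).elim
          have : (2:ℚ) ≤ (n₁:ℚ) := by exact_mod_cast (by omega : (2:ℤ) ≤ n₁)
          rw [hd2]; push_cast; linarith
        · have : 2 ≤ f₂.natDegree := by omega
          have h2 : (2:ℚ) ≤ (f₂.natDegree : ℚ) := by exact_mod_cast this
          nlinarith
      rw [hmeq]
      calc (2:ℚ) ≤ (f₂.natDegree : ℚ) * (n₁ : ℚ) := key
        _ = (f₁.natDegree : ℚ) * ((f₂.natDegree : ℚ) * r₁) := by rw [← hn₁]; ring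
    · have hmeq : m = r₂ := min_eq_right hr
      have key : (2:ℚ) ≤ (f₁.natDegree : ℚ) * (n₂ : ℚ) := by
        by_cases hd1 : f₁.natDegree = 1
        · have hn₂ne1 : n₂ ≠ 1 := fun h => (hnE₂ (hEis₂ h) hd1).elim
          have : (2:ℚ) ≤ (n₂:ℚ) := by exact_mod_cast (by omega : (2:ℤ) ≤ n₂)
          rw [hd1]; push_cast; linarith
        · have : 2 ≤ f₁.natDegree := by omega
          have h2 : (2:ℚ) ≤ (f₁.natDegree : ℚ) := by exact_mod_cast this
          nlinarith
      rw [hmeq]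
      calc (2:ℚ) ≤ (f₁.natDegree : ℚ) * (n₂ : ℚ) := key
        _ = (f₁.natDegree : ℚ) * ((f₂.natDegree : ℚ) * r₂) := by rw [← hn₂]
end

section
/- Let φ ∈ O_K[x] be monic irreducible and λ ∈ ℚ with λ ≥ 0, and consider the diskoid D(φ,λ) := {γ ∈ K̄ : ν(φ(γ)) ≥ λ}. Let α ∈ K̄ with ν(α) ≥ 0 and let f be the minimal polynomial of α over K. If α ∈ D(φ,λ), then there exists λ′ ∈ ℚ such that D(φ,λ) = D(f,λ′), i.e. {γ ∈ K̄ : ν(φ(γ)) ≥ λ} = {γ ∈ K̄ : ν(f(γ)) ≥ λ′}. -/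
open Polynomial
theorem DK.exists_max {α β : Type*} [LinearOrder β] (f : α → β) (s : Multiset α) (hs : s ≠ 0) :
    ∃ a ∈ s, ∀ b ∈ s, f b ≤ f a := by
  induction s using Multiset.induction_on with
  | empty => exact absurd rfl hs
  | cons a t ih =>
    rcases eq_or_ne t 0 with rfl | ht
    · exact ⟨a, Multiset.mem_cons_self _ _, by simp⟩
    · obtain ⟨m, hm, hmax⟩ := ih ht
      rcases le_total (f a) (f m) with h | h
      · refine ⟨m, Multiset.mem_cons_of_mem hm, ?_⟩
        intro b hb
        rcases Multiset.mem_cons.mp hb with rfl | hb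
        · exact h
        · exact hmax b hb
      · refine ⟨a, Multiset.mem_cons_self _ _, ?_⟩
        intro b hb
        rcases Multiset.mem_cons.mp hb with rfl | hb
        · exact le_rfl
        · exact (hmax b hb).trans h

theorem DK.sum_coe (s : Multiset ℚ) :
    ((s.map (fun q : ℚ => (q : WithTop ℚ))).sum) = (s.sum : WithTop ℚ) :=
  (map_multiset_sum (WithTop.addHom : ℚ →+ WithTop ℚ) s).symm

theorem DK.sum_untop (s : Multiset (WithTop ℚ)) (h : ∀ x ∈ s, x ≠ ⊤) :
    s.sum = (((s.map (WithTop.untopD 0)).sum : ℚ) : WithTop ℚ) := by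
  induction s using Multiset.induction_on with
  | empty => simp
  | cons a t ih =>
    have ha : a ≠ ⊤ := h a (Multiset.mem_cons_self _ _)
    obtain ⟨q, rfl⟩ := WithTop.ne_top_iff_exists.mp ha
    have := ih (fun x hx => h x (Multiset.mem_cons_of_mem hx))
    simp [this, WithTop.untopD_coe]

theorem DK.sum_ne_top (s : Multiset (WithTop ℚ)) (h : ∀ x ∈ s, x ≠ ⊤) :
    s.sum ≠ ⊤ := by
  rw [DK.sum_untop s h]; exact WithTop.coe_ne_top

theorem DK.thresh (c : Multiset (WithTop ℚ)) (hc : ⊤ ∈ c) (lam : ℚ) :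
    ∃ r : ℚ, ∀ D : WithTop ℚ,
      ((lam : WithTop ℚ) ≤ (c.map (fun x => min D x)).sum ↔ (r : WithTop ℚ) ≤ D) := by
  classical
  set n := Multiset.card c with hn
  set F := c.filter (fun x => x ≠ ⊤) with hF
  -- card of any T in the powerset of F is < n
  have hsplit : F + c.filter (fun x => ¬ x ≠ ⊤) = c := Multiset.filter_add_not _ c
  have htoprest : ⊤ ∈ c.filter (fun x => ¬ x ≠ ⊤) := Multiset.mem_filter.mpr ⟨hc, by simp⟩
  have hcardF : Multiset.card F < n := by
    have h1 : Multiset.card F + Multiset.card (c.filter (fun x => ¬ x ≠ ⊤)) = n := by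
      rw [← Multiset.card_add, hsplit]
    have h2 : 0 < Multiset.card (c.filter (fun x => ¬ x ≠ ⊤)) :=
      Multiset.card_pos.mpr (fun h => by
        rw [h] at htoprest; exact Multiset.notMem_zero _ htoprest)
    omega
  have hTlt : ∀ T ∈ F.powerset, Multiset.card T < n := fun T hT =>
    lt_of_le_of_lt (Multiset.card_le_card (Multiset.mem_powerset.mp hT)) hcardF
  have hTc : ∀ T ∈ F.powerset, T ≤ c := fun T hT =>
    le_trans (Multiset.mem_powerset.mp hT) (Multiset.filter_le _ c)
  have hTfin : ∀ T ∈ F.powerset, ∀ x ∈ T, x ≠ ⊤ := fun T hT x hx =>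
    (Multiset.mem_filter.mp
      (Multiset.mem_of_le (Multiset.mem_powerset.mp hT) hx)).2
  set cand : Multiset ℚ := F.powerset.map
    (fun T => (lam - (T.map (WithTop.untopD 0)).sum) / ((n : ℚ) - Multiset.card T)) with hcand
  have hcne : cand ≠ 0 := by
    have hmem : ((lam - ((0 : Multiset (WithTop ℚ)).map (WithTop.untopD 0)).sum) /
        ((n : ℚ) - Multiset.card (0 : Multiset (WithTop ℚ)))) ∈ cand :=
      Multiset.mem_map.mpr ⟨0, Multiset.mem_powerset.mpr (Multiset.zero_le F), rfl⟩
    intro h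
    rw [h] at hmem
    exact Multiset.notMem_zero _ hmem
  obtain ⟨r, hrmem, hrmax⟩ := DK.exists_max id cand hcne
  simp only [id] at hrmax
  refine ⟨r, fun D => ⟨?_, ?_⟩⟩
  · -- lam ≤ sum → r ≤ D
    intro hlam
    by_contra hDr
    push_neg at hDr
    have hDne : D ≠ ⊤ := hDr.ne_top
    obtain ⟨d, hd⟩ := WithTop.ne_top_iff_exists.mp hDne
    subst hd
    obtain ⟨T, hTmem, hTr⟩ := Multiset.mem_map.mp hrmem
    set sT : ℚ := (T.map (WithTop.untopD 0)).sum with hsT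
    set k := Multiset.card T with hk
    have hknN : k < n := hTlt T hTmem
    have hkn : (k:ℚ) < (n:ℚ) := by exact_mod_cast hknN
    have hnk : (0:ℚ) < (n : ℚ) - k := by linarith
    have hrk : lam = sT + r * ((n:ℚ) - k) := by
      rw [← hTr]; field_simp; ring
    have hcT : c - T + T = c := tsub_add_cancel_of_le (hTc T hTmem)
    have hsum : ((c.map fun x => min (↑d) x).sum)
        = (((c - T).map fun x => min (↑d) x).sum) + ((T.map fun x => min (↑d) x).sum) := by
      conv_lhs => rw [← hcT]
      rw [Multiset.map_add, Multiset.sum_add]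
    have h1 : (T.map fun x => min (↑d) x).sum ≤ (sT : WithTop ℚ) := by
      have h := Multiset.sum_map_le_sum_map (s := T) (fun x => min (↑d) x) id
        (fun x _ => min_le_right _ _)
      rw [Multiset.map_id] at h
      rwa [DK.sum_untop T (hTfin T hTmem)] at h
    have hmcard : Multiset.card (c - T) = n - k := Multiset.card_sub (hTc T hTmem)
    have hm1 : 1 ≤ n - k := by omega
    have h2 : ((c - T).map fun x => min (↑d) x).sum ≤ ((((n - k : ℕ) : ℚ) * d : ℚ) : WithTop ℚ) := by
      have h := Multiset.sum_map_le_sum_map (s := c - T) (fun x => min (↑d) x)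
        (fun _ => ((d : WithTop ℚ))) (fun x _ => min_le_left _ _)
      rw [show ((c - T).map fun _ => ((d : WithTop ℚ)))
          = ((c - T).map fun _ => d).map (fun q : ℚ => (q : WithTop ℚ)) from by
        rw [Multiset.map_map]; rfl] at h
      rw [DK.sum_coe] at h
      simpa [Multiset.map_const', Multiset.sum_replicate, hmcard, nsmul_eq_mul] using h
    have hdr : d < r := by exact_mod_cast hDr
    have hcast : ((n - k : ℕ) : ℚ) = (n : ℚ) - k := by
      rw [Nat.cast_sub hknN.le]
    have hm1' : (1:ℚ) ≤ ((n:ℚ) - k) := by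
      rw [← hcast]; exact_mod_cast hm1
    have hlt : ((n - k : ℕ) : ℚ) * d + sT < lam := by
      rw [hcast, hrk]
      nlinarith
    have : ((c.map fun x => min (↑d) x).sum) < (lam : WithTop ℚ) := by
      rw [hsum]
      calc (((c - T).map fun x => min (↑d) x).sum) + ((T.map fun x => min (↑d) x).sum)
          ≤ ((((n - k : ℕ) : ℚ) * d : ℚ) : WithTop ℚ) + (sT : WithTop ℚ) := add_le_add h2 h1
        _ = ((((n - k : ℕ) : ℚ) * d + sT : ℚ) : WithTop ℚ) := by rw [← WithTop.coe_add]
        _ < (lam : WithTop ℚ) := WithTop.coe_lt_coe.mpr hlt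
    exact absurd hlam (not_le.mpr this)
  · -- r ≤ D → lam ≤ sum
    intro hrD
    have hmono : ((c.map fun x => min ((r : WithTop ℚ)) x).sum) ≤ (c.map fun x => min D x).sum :=
      Multiset.sum_map_le_sum_map _ _ (fun x _ => min_le_min hrD le_rfl)
    refine le_trans ?_ hmono
    set T := c.filter (fun x => x < (r : WithTop ℚ)) with hT
    set Rst := c.filter (fun x => ¬ x < (r : WithTop ℚ)) with hRst
    have hsplit2 : T + Rst = c := Multiset.filter_add_not _ c
    have hTmem : T ∈ F.powerset := Multiset.mem_powerset.mpr (Multiset.le_filter.mpr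
      ⟨Multiset.filter_le _ c, fun a ha => ((Multiset.mem_filter.mp ha).2).ne_top⟩)
    set sT : ℚ := (T.map (WithTop.untopD 0)).sum with hsT
    set k := Multiset.card T with hk
    have hknN : k < n := hTlt T hTmem
    have hkn : (k:ℚ) < (n:ℚ) := by exact_mod_cast hknN
    have hnk : (0:ℚ) < (n : ℚ) - k := by linarith
    have hcandle : (lam - sT) / ((n:ℚ) - k) ≤ r :=
      hrmax _ (Multiset.mem_map.mpr ⟨T, hTmem, rfl⟩)
    have hlam2 : lam ≤ sT + ((n:ℚ) - k) * r := by
      rw [div_le_iff₀ hnk] at hcandle; linarith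
    have hcardR : Multiset.card Rst = n - k := by
      have hcc := congrArg Multiset.card hsplit2
      rw [Multiset.card_add] at hcc
      omega
    have e1 : (T.map fun x => min ((r : WithTop ℚ)) x).sum = (sT : WithTop ℚ) := by
      have he : (T.map fun x => min ((r : WithTop ℚ)) x) = T.map id :=
        Multiset.map_congr rfl (fun x hx =>
          min_eq_right (le_of_lt (Multiset.mem_filter.mp hx).2))
      rw [he, Multiset.map_id, DK.sum_untop T (hTfin T hTmem)]
    have e2 : (Rst.map fun x => min ((r : WithTop ℚ)) x).sum
        = ((((n - k : ℕ) : ℚ) * r : ℚ) : WithTop ℚ) := by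
      have hc2 : (Rst.map fun x => min ((r : WithTop ℚ)) x) = Rst.map (fun _ => ((r : WithTop ℚ))) :=
        Multiset.map_congr rfl (fun x hx =>
          min_eq_left (not_lt.mp (Multiset.mem_filter.mp hx).2))
      rw [hc2, show (Rst.map fun _ => ((r : WithTop ℚ)))
          = (Rst.map fun _ => r).map (fun q : ℚ => (q : WithTop ℚ)) from by
        rw [Multiset.map_map]; rfl, DK.sum_coe]
      simp [Multiset.map_const', Multiset.sum_replicate, hcardR, nsmul_eq_mul]
    have hcast : ((n - k : ℕ) : ℚ) = (n : ℚ) - k := by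
      rw [Nat.cast_sub hknN.le]
    calc ((lam : WithTop ℚ))
        ≤ ((sT + ((n:ℚ) - k) * r : ℚ) : WithTop ℚ) := WithTop.coe_le_coe.mpr hlam2
      _ = (T.map fun x => min ((r : WithTop ℚ)) x).sum
          + (Rst.map fun x => min ((r : WithTop ℚ)) x).sum := by
          rw [e1, e2, ← WithTop.coe_add, hcast]
      _ = (c.map fun x => min ((r : WithTop ℚ)) x).sum := by
          conv_rhs => rw [← hsplit2]
          rw [Multiset.map_add, Multiset.sum_add]


/-- Let `K` be a field, Henselian with respect to a discrete valuation
`ν_K` with algebraically closed residue field, with fixed algebraic closure `Kbar` and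
(unique, Galois-invariant) extension `v` of `ν_K`, normalized so that a uniformizer
`πK` satisfies `v πK = 1` and `v` is `ℤ`-valued on `K`.
Let `φ ∈ O_K[x]` be monic irreducible and `λ ∈ ℚ` with `λ ≥ 0`, and consider the
diskoid `D(φ,λ) := {γ ∈ Kbar : ν(φ(γ)) ≥ λ}` (a root `γ` of `φ`, having `ν(φ(γ)) = ∞`,
always belongs to it).  Let `α ∈ Kbar` with `ν(α) ≥ 0` and let `f` be the minimal
polynomial of `α` over `K`.  If `α ∈ D(φ,λ)`, then there exists `λ′ ∈ ℚ` such that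
`D(φ,λ) = D(f,λ′)`. -/
theorem diskoid_recenter
    {K Kbar : Type*} [Field K] [Field Kbar] [Algebra K Kbar] [IsAlgClosure K Kbar]
    (v : Kbar → ℚ)
    (hv_mul : ∀ x y : Kbar, x ≠ 0 → y ≠ 0 → v (x * y) = v x + v y)
    (hv_add : ∀ x y : Kbar, x ≠ 0 → y ≠ 0 → x + y ≠ 0 → min (v x) (v y) ≤ v (x + y))
    (hv_gal : ∀ (σ : Kbar ≃ₐ[K] Kbar) (x : Kbar), v (σ x) = v x)
    (hv_int : ∀ x : K, x ≠ 0 → ∃ n : ℤ, v (algebraMap K Kbar x) = (n : ℚ))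
    (πK : K) (hπK : πK ≠ 0 ∧ v (algebraMap K Kbar πK) = 1)
    (hv_res : ∀ x : Kbar, x ≠ 0 → 0 ≤ v x →
      ∃ η : K, x = algebraMap K Kbar η ∨ 0 < v (x - algebraMap K Kbar η))
    (φ : Polynomial K) (hmon : φ.Monic) (hirr : Irreducible φ)
    (hcoeff : ∀ n, φ.coeff n ≠ 0 → 0 ≤ v (algebraMap K Kbar (φ.coeff n)))
    (lam : ℚ) (hlam : 0 ≤ lam)
    (α : Kbar) (hα : α = 0 ∨ 0 ≤ v α)
    (hmem : Polynomial.aeval α φ = 0 ∨ lam ≤ v (Polynomial.aeval α φ)) :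
    ∃ lam' : ℚ,
      {γ : Kbar | Polynomial.aeval γ φ = 0 ∨ lam ≤ v (Polynomial.aeval γ φ)} =
      {γ : Kbar | Polynomial.aeval γ (minpoly K α) = 0 ∨
        lam' ≤ v (Polynomial.aeval γ (minpoly K α))} := by
  classical
  have hAlg : Algebra.IsAlgebraic K Kbar := IsAlgClosure.isAlgebraic
  haveI : IsAlgClosed Kbar := IsAlgClosure.isAlgClosed K
  set ι := algebraMap K Kbar with hι
  set V : Kbar → WithTop ℚ := fun x => if x = 0 then ⊤ else ((v x : ℚ) : WithTop ℚ) with hVdef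
  have hV0 : V 0 = ⊤ := if_pos rfl
  have hVne : ∀ {x : Kbar}, x ≠ 0 → V x = ((v x : ℚ) : WithTop ℚ) := fun hx => if_neg hx
  have hv1 : v 1 = 0 := by
    have h := hv_mul 1 1 one_ne_zero one_ne_zero
    rw [mul_one] at h; linarith
  have hVmul : ∀ x y : Kbar, V (x * y) = V x + V y := by
    intro x y
    by_cases hx : x = 0
    · simp [hx, hV0]
    by_cases hy : y = 0
    · simp [hy, hV0]
    rw [hVne hx, hVne hy, hVne (mul_ne_zero hx hy), hv_mul x y hx hy, WithTop.coe_add]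
  have hvneg : ∀ x : Kbar, x ≠ 0 → v (-x) = v x := by
    intro x hx
    have hm1 : v (-1 : Kbar) = 0 := by
      have h := hv_mul (-1) (-1) (by norm_num) (by norm_num)
      rw [neg_mul_neg, one_mul, hv1] at h
      linarith
    have h := hv_mul (-1) x (by norm_num) hx
    rw [neg_one_mul] at h
    rw [h, hm1, zero_add]
  have hVneg : ∀ x : Kbar, V (-x) = V x := by
    intro x
    by_cases hx : x = 0
    · simp [hx]
    · rw [hVne (neg_ne_zero.mpr hx), hVne hx, hvneg x hx]
  have hVadd : ∀ x y : Kbar, min (V x) (V y) ≤ V (x + y) := by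
    intro x y
    by_cases hx : x = 0
    · simp [hx, hV0]
    by_cases hy : y = 0
    · simp [hy, hV0]
    by_cases hxy : x + y = 0
    · simp [hxy, hV0]
    rw [hVne hx, hVne hy, hVne hxy, ← WithTop.coe_min, WithTop.coe_le_coe]
    exact hv_add x y hx hy hxy
  have hVsub : ∀ x y : Kbar, min (V x) (V y) ≤ V (x - y) := by
    intro x y
    have h := hVadd x (-y)
    rwa [hVneg y, ← sub_eq_add_neg] at h
  have hVgal : ∀ (σ : Kbar ≃ₐ[K] Kbar) (x : Kbar), V (σ x) = V x := by
    intro σ x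
    by_cases hx : x = 0
    · simp [hx]
    have hσx : σ x ≠ 0 := fun h => hx (by
      have : σ x = σ 0 := by rw [h, map_zero]
      exact σ.injective this)
    rw [hVne hσx, hVne hx, hv_gal]
  have htrans : ∀ (x : Kbar) (q : ℚ), (x = 0 ∨ q ≤ v x) ↔ ((q : WithTop ℚ) ≤ V x) := by
    intro x q
    by_cases hx : x = 0
    · simp [hx, hV0, le_top]
    · rw [hVne hx]
      simp [hx, WithTop.coe_le_coe]
  have hVprod : ∀ s : Multiset Kbar, V s.prod = (s.map V).sum := by
    intro s
    induction s using Multiset.induction_on with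
    | empty =>
      simp only [Multiset.prod_zero, Multiset.map_zero, Multiset.sum_zero]
      rw [hVne one_ne_zero, hv1]
      rfl
    | cons a t ih =>
      rw [Multiset.prod_cons, hVmul, ih, Multiset.map_cons, Multiset.sum_cons]
  have hpoly : ∀ (p : K[X]), p.Monic → ∀ γ : Kbar,
      V ((aeval γ) p) = (((p.map ι).roots).map (fun β => V (γ - β))).sum := by
    intro p hp γ
    have hsplits : ((p.map ι)).Splits := IsAlgClosed.splits _
    have heq : p.map ι = (((p.map ι).roots).map (fun a => X - C a)).prod :=
      hsplits.eq_prod_roots_of_monic (hp.map ι)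
    set Rp := (p.map ι).roots with hRp
    have h2 : (aeval γ) p = (Rp.map (fun a => γ - a)).prod := by
      rw [aeval_def, ← eval_map, heq, eval_multiset_prod, Multiset.map_map]
      congr 1
      apply Multiset.map_congr rfl
      intro a _
      simp
    rw [h2, hVprod, Multiset.map_map]
    rfl
  have hmemroots : ∀ (p : K[X]), p ≠ 0 → ∀ β : Kbar, (β ∈ (p.map ι).roots ↔ (aeval β) p = 0) := by
    intro p hp β
    rw [Polynomial.mem_roots (Polynomial.map_ne_zero hp), IsRoot, Polynomial.eval_map, ← aeval_def]
  have hrootsmap : ∀ (p : K[X]) (σ : Kbar ≃ₐ[K] Kbar),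
      ((p.map ι).roots).map σ = (p.map ι).roots := by
    intro p σ
    have hs : (p.map ι).Splits := IsAlgClosed.splits _
    have h := hs.roots_map (σ : Kbar →+* Kbar)
    rw [Polynomial.map_map] at h
    rw [show ((σ : Kbar →+* Kbar)).comp ι = ι from RingHom.ext (fun a => σ.commutes a)] at h
    exact h.symm
  have hconj : ∀ x y : Kbar, (aeval y) (minpoly K x) = 0 → ∃ σ : Kbar ≃ₐ[K] Kbar, σ x = y :=
    fun x y h => minpoly.exists_algEquiv_of_root' (Algebra.IsAlgebraic.isAlgebraic x) h
  -- ultrametric closest-point lemma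
  have hclose : ∀ (S : Multiset Kbar) (γ β₁ : Kbar), (∀ β ∈ S, V (γ - β) ≤ V (γ - β₁)) →
      ∀ β ∈ S, V (γ - β) = min (V (γ - β₁)) (V (β₁ - β)) := by
    intro S γ β₁ hmax β hβ
    refine le_antisymm (le_min (hmax β hβ) ?_) ?_
    · have h2 := hVadd (β₁ - γ) (γ - β)
      rw [sub_add_sub_cancel] at h2
      rw [show β₁ - γ = -(γ - β₁) by ring, hVneg] at h2
      calc V (γ - β) = min (V (γ - β₁)) (V (γ - β)) := (min_eq_right (hmax β hβ)).symm
        _ ≤ V (β₁ - β) := h2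
    · have h := hVadd (γ - β₁) (β₁ - β)
      rwa [sub_add_sub_cancel] at h
  -- base-change of the evaluation formula to a fixed root
  have hbase : ∀ (p : K[X]) (b : Kbar), p.Monic → p = minpoly K b →
      ∀ γ : Kbar, ∃ (E : WithTop ℚ) (β₁ : Kbar), β₁ ∈ (p.map ι).roots ∧ E = V (γ - β₁) ∧
        (∀ β ∈ (p.map ι).roots, V (γ - β) ≤ E) ∧
        V ((aeval γ) p) = (((p.map ι).roots).map (fun β => min E (V (b - β)))).sum := by
    intro p b hpm hpb γ
    have hp0 : p ≠ 0 := hpm.ne_zero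
    have hbroot : (aeval b) p = 0 := by rw [hpb]; exact minpoly.aeval K b
    have hbmem : b ∈ (p.map ι).roots := (hmemroots p hp0 b).mpr hbroot
    have hSne : (p.map ι).roots ≠ 0 := fun h => by rw [h] at hbmem; exact Multiset.notMem_zero _ hbmem
    obtain ⟨β₁, hβ₁, hmax⟩ := DK.exists_max (fun β => V (γ - β)) _ hSne
    refine ⟨V (γ - β₁), β₁, hβ₁, rfl, hmax, ?_⟩
    rw [hpoly p hpm γ]
    have h1 : ((p.map ι).roots).map (fun β => V (γ - β))
        = ((p.map ι).roots).map (fun β => min (V (γ - β₁)) (V (β₁ - β))) :=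
      Multiset.map_congr rfl (fun β hβ => hclose _ γ β₁ hmax β hβ)
    rw [h1]
    have hβ₁root : (aeval β₁) (minpoly K b) = 0 := by
      rw [← hpb]; exact (hmemroots p hp0 β₁).mp hβ₁
    obtain ⟨σ, hσ⟩ := hconj b β₁ hβ₁root
    congr 1
    conv_lhs => rw [← hrootsmap p σ]
    rw [Multiset.map_map]
    apply Multiset.map_congr rfl
    intro β hβ
    simp only [Function.comp_apply]
    congr 1
    rw [← hσ, ← map_sub, hVgal]
  -- characterization of diskoids via distance to roots
  have hcharGen : ∀ (p : K[X]) (b : Kbar), p.Monic → p = minpoly K b → ∀ (q s : ℚ),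
      (∀ D : WithTop ℚ,
        ((q : WithTop ℚ) ≤ (((p.map ι).roots).map (fun β => min D (V (b - β)))).sum
          ↔ (s : WithTop ℚ) ≤ D)) →
      ∀ γ : Kbar, ((q : WithTop ℚ) ≤ V ((aeval γ) p)
        ↔ ∃ β ∈ (p.map ι).roots, (s : WithTop ℚ) ≤ V (γ - β)) := by
    intro p b hpm hpb q s hthr γ
    obtain ⟨E, β₁, hβ₁, hE, hmax, hform⟩ := hbase p b hpm hpb γ
    rw [hform]
    constructor
    · intro h
      refine ⟨β₁, hβ₁, ?_⟩
      rw [← hE]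
      exact (hthr E).mp h
    · rintro ⟨β, hβ, hrβ⟩
      exact (hthr E).mpr (le_trans hrβ (hmax β hβ))
  -- main case split
  by_cases hroot : (aeval α) φ = 0
  · exact ⟨lam, by rw [minpoly.eq_of_irreducible_of_monic hirr hroot hmon]⟩
  have hval : lam ≤ v ((aeval α) φ) := hmem.resolve_left hroot
  have hφ0 : φ ≠ 0 := hmon.ne_zero
  set R := (φ.map ι).roots with hR
  have hRne : R ≠ 0 := by
    have hdeg : (φ.map ι).degree ≠ 0 := by
      rw [Polynomial.degree_map]
      exact (natDegree_pos_iff_degree_pos.mp hirr.natDegree_pos).ne'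
    obtain ⟨x, hx⟩ := IsAlgClosed.exists_root (φ.map ι) hdeg
    have hxR : x ∈ R := by
      rw [hR, Polynomial.mem_roots (Polynomial.map_ne_zero hφ0)]
      exact hx
    exact fun h => by rw [h] at hxR; exact Multiset.notMem_zero _ hxR
  obtain ⟨β₀, hβ₀R, hβ₀max⟩ := DK.exists_max (fun β => V (α - β)) R hRne
  have hβ₀root : (aeval β₀) φ = 0 := (hmemroots φ hφ0 β₀).mp hβ₀R
  have hφmin : φ = minpoly K β₀ := minpoly.eq_of_irreducible_of_monic hirr hβ₀root hmon
  set c := R.map (fun β => V (β₀ - β)) with hc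
  have hctop : ⊤ ∈ c := Multiset.mem_map.mpr ⟨β₀, hβ₀R, by rw [sub_self]; exact hV0⟩
  obtain ⟨r, hr⟩ := DK.thresh c hctop lam
  have hrφ : ∀ D : WithTop ℚ,
      ((lam : WithTop ℚ) ≤ (R.map (fun β => min D (V (β₀ - β)))).sum ↔ (r : WithTop ℚ) ≤ D) := by
    intro D
    rw [show R.map (fun β => min D (V (β₀ - β))) = c.map (fun x => min D x) from by
      rw [hc, Multiset.map_map]; rfl]
    exact hr D
  have hφchar := hcharGen φ β₀ hmon hφmin lam r hrφ
  -- α is r-close to β₀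
  have hαmem : (lam : WithTop ℚ) ≤ V ((aeval α) φ) := (htrans _ lam).mp (Or.inr hval)
  have hρ : (r : WithTop ℚ) ≤ V (α - β₀) := by
    obtain ⟨β, hβ, hrβ⟩ := (hφchar α).mp hαmem
    exact le_trans hrβ (hβ₀max β hβ)
  -- minimal polynomial of α
  have hint : IsIntegral K α := (hAlg.isAlgebraic α).isIntegral
  set f := minpoly K α with hf
  have hfmon : f.Monic := minpoly.monic hint
  have hf0 : f ≠ 0 := hfmon.ne_zero
  set A := (f.map ι).roots with hA
  have hαA : α ∈ A := (hmemroots f hf0 α).mpr (minpoly.aeval K α)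
  -- the new radius lam'
  have hS0ne : (A.map (fun a => min ((r : WithTop ℚ)) (V (α - a)))).sum ≠ ⊤ := by
    apply DK.sum_ne_top
    intro x hx
    obtain ⟨a, _, rfl⟩ := Multiset.mem_map.mp hx
    exact ne_top_of_le_ne_top WithTop.coe_ne_top (min_le_left _ _)
  obtain ⟨lam', hlam'⟩ := WithTop.ne_top_iff_exists.mp hS0ne
  -- threshold property on the f-side
  have hthr' : ∀ D : WithTop ℚ,
      ((lam' : WithTop ℚ) ≤ (A.map (fun a => min D (V (α - a)))).sum ↔ (r : WithTop ℚ) ≤ D) := by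
    intro D
    constructor
    · intro h
      by_contra hDr
      push_neg at hDr
      have hDne : D ≠ ⊤ := hDr.ne_top
      obtain ⟨d, hd⟩ := WithTop.ne_top_iff_exists.mp hDne
      subst hd
      have hdr : d < r := by exact_mod_cast hDr
      set A' := A.erase α with hA'
      have hconsA : α ::ₘ A' = A := Multiset.cons_erase hαA
      have hsplit1 : (A.map (fun a => min ((d : WithTop ℚ)) (V (α - a)))).sum
          = (d : WithTop ℚ) + (A'.map (fun a => min ((d : WithTop ℚ)) (V (α - a)))).sum := by
        conv_lhs => rw [← hconsA]
        rw [Multiset.map_cons, Multiset.sum_cons, sub_self, hV0, min_eq_left le_top]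
      have hsplit2 : (A.map (fun a => min ((r : WithTop ℚ)) (V (α - a)))).sum
          = (r : WithTop ℚ) + (A'.map (fun a => min ((r : WithTop ℚ)) (V (α - a)))).sum := by
        conv_lhs => rw [← hconsA]
        rw [Multiset.map_cons, Multiset.sum_cons, sub_self, hV0, min_eq_left le_top]
      have hmono : (A'.map (fun a => min ((d : WithTop ℚ)) (V (α - a)))).sum
          ≤ (A'.map (fun a => min ((r : WithTop ℚ)) (V (α - a)))).sum :=
        Multiset.sum_map_le_sum_map _ _ (fun a _ =>
          min_le_min (WithTop.coe_le_coe.mpr hdr.le) le_rfl)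
      have hs2ne : (A'.map (fun a => min ((r : WithTop ℚ)) (V (α - a)))).sum ≠ ⊤ := by
        intro htop
        have hh := hlam'
        rw [hsplit2, htop, add_top] at hh
        exact WithTop.coe_ne_top hh
      obtain ⟨s2, hs2⟩ := WithTop.ne_top_iff_exists.mp hs2ne
      have hs1ne : (A'.map (fun a => min ((d : WithTop ℚ)) (V (α - a)))).sum ≠ ⊤ :=
        ne_top_of_le_ne_top hs2ne hmono
      obtain ⟨s1, hs1⟩ := WithTop.ne_top_iff_exists.mp hs1ne
      have hs12 : s1 ≤ s2 := by
        rw [← WithTop.coe_le_coe, hs1, hs2]; exact hmono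
      have hlt : (A.map (fun a => min ((d : WithTop ℚ)) (V (α - a)))).sum
          < (lam' : WithTop ℚ) := by
        rw [hsplit1, ← hs1, ← WithTop.coe_add]
        have hEq : (lam' : WithTop ℚ) = ((r + s2 : ℚ) : WithTop ℚ) := by
          rw [WithTop.coe_add, hlam', hsplit2, hs2]
        rw [hEq]
        exact WithTop.coe_lt_coe.mpr (by linarith)
      exact absurd h (not_le.mpr hlt)
    · intro hrD
      rw [hlam']
      exact Multiset.sum_map_le_sum_map _ _ (fun a _ => min_le_min hrD le_rfl)
  have hfchar := hcharGen f α hfmon hf lam' r hthr'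
  -- Hausdorff closeness of the two root sets
  have H1 : ∀ a ∈ A, ∃ β ∈ R, (r : WithTop ℚ) ≤ V (a - β) := by
    intro a ha
    have haroot : (aeval a) f = 0 := (hmemroots f hf0 a).mp ha
    obtain ⟨σ, hσ⟩ := hconj α a (by rw [← hf]; exact haroot)
    have hσβ₀root : (aeval (σ β₀)) φ = 0 := by
      have hh : (aeval (σ β₀)) φ = σ ((aeval β₀) φ) :=
        Polynomial.aeval_algHom_apply σ.toAlgHom β₀ φ
      rw [hh, hβ₀root, map_zero]
    refine ⟨σ β₀, (hmemroots φ hφ0 (σ β₀)).mpr hσβ₀root, ?_⟩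
    rw [← hσ, ← map_sub, hVgal]
    exact hρ
  have H2 : ∀ β ∈ R, ∃ a ∈ A, (r : WithTop ℚ) ≤ V (β - a) := by
    intro β hβ
    have hβroot : (aeval β) (minpoly K β₀) = 0 := by
      rw [← hφmin]; exact (hmemroots φ hφ0 β).mp hβ
    obtain ⟨σ, hσ⟩ := hconj β₀ β hβroot
    have hσαroot : (aeval (σ α)) f = 0 := by
      have hh : (aeval (σ α)) f = σ ((aeval α) f) :=
        Polynomial.aeval_algHom_apply σ.toAlgHom α f
      rw [hh, hf, minpoly.aeval, map_zero]
    refine ⟨σ α, (hmemroots f hf0 (σ α)).mpr hσαroot, ?_⟩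
    rw [← hσ, ← map_sub, hVgal, show β₀ - α = -(α - β₀) by ring, hVneg]
    exact hρ
  have hballs : ∀ γ : Kbar,
      (∃ β ∈ R, (r : WithTop ℚ) ≤ V (γ - β)) ↔ (∃ a ∈ A, (r : WithTop ℚ) ≤ V (γ - a)) := by
    intro γ
    constructor
    · rintro ⟨β, hβ, hrβ⟩
      obtain ⟨a, ha, hra⟩ := H2 β hβ
      refine ⟨a, ha, ?_⟩
      have h := hVadd (γ - β) (β - a)
      rw [sub_add_sub_cancel] at h
      exact le_trans (le_min hrβ hra) h
    · rintro ⟨a, ha, hra⟩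
      obtain ⟨β, hβ, hrβ⟩ := H1 a ha
      refine ⟨β, hβ, ?_⟩
      have h := hVadd (γ - a) (a - β)
      rw [sub_add_sub_cancel] at h
      exact le_trans (le_min hra hrβ) h
  -- conclusion
  refine ⟨lam', ?_⟩
  ext γ
  simp only [Set.mem_setOf_eq]
  exact ((htrans _ lam).trans (((hφchar γ).trans (hballs γ)).trans (hfchar γ).symm)).trans
    (htrans _ lam').symm
end

section
/- Let b/c be a rational number in lowest terms with 0 ≤ b/c < 1 (b ≥ 0, c ≥ 1, gcd(b,c) = 1). Then every shortest 1-path from 1 to b/c has at most c − b + 1 entries. -/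
/-- For an integer `N ≥ 1` and rationals, a list `l` of rationals is an *`N`-path*
from `a` to `a′` if it is a strictly decreasing sequence starting at `a` and ending
at `a′` such that each pair of consecutive entries `x > y` (written in lowest terms
with denominators `x.den`, `y.den`) satisfies
`x − y = N/(lcm(N, x.den) · lcm(N, y.den))`. -/
def IsNPath (N : ℕ) (a a' : ℚ) (l : List ℚ) : Prop :=
  l.head? = some a ∧ l.getLast? = some a' ∧
  l.Chain' (fun x y => x > y ∧
    x - y = (N : ℚ) / ((Nat.lcm N x.den : ℚ) * (Nat.lcm N y.den : ℚ)))

/-- An `N`-path from `a` to `a′` is *shortest* if no proper subsequence of it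
containing both `a` and `a′` is again an `N`-path from `a` to `a′`. -/
def IsShortestNPath (N : ℕ) (a a' : ℚ) (l : List ℚ) : Prop :=
  IsNPath N a a' l ∧
  ∀ l' : List ℚ, l'.Sublist l → l' ≠ l → a ∈ l' → a' ∈ l' → ¬ IsNPath N a a' l'



/-- The step relation for `1`-paths. -/
def R1 (x y : ℚ) : Prop :=
  x > y ∧ x - y = ((1:ℕ) : ℚ) / ((Nat.lcm 1 x.den : ℚ) * (Nat.lcm 1 y.den : ℚ))

/-- `F q = den q - num q`. -/
def Fq (q : ℚ) : ℤ := (q.den : ℤ) - q.num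

lemma num_eq_self_mul_den (x : ℚ) : (x.num : ℚ) = x * (x.den : ℚ) := by
  have hdx : ((x.den : ℚ)) ≠ 0 := by exact_mod_cast x.den_nz
  have h := Rat.num_div_den x
  rw [div_eq_iff hdx] at h
  exact h

lemma det_of_R1 {x y : ℚ} (h : R1 x y) :
    x.num * (y.den : ℤ) - y.num * (x.den : ℤ) = 1 := by
  obtain ⟨-, h2⟩ := h
  simp only [Nat.lcm_one_left, Nat.cast_one] at h2
  have hx : (x.num : ℚ) = x * (x.den : ℚ) := num_eq_self_mul_den x
  have hy : (y.num : ℚ) = y * (y.den : ℚ) := num_eq_self_mul_den y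
  have hdx : ((x.den : ℚ)) ≠ 0 := by exact_mod_cast x.den_nz
  have hdy : ((y.den : ℚ)) ≠ 0 := by exact_mod_cast y.den_nz
  have : (x.num : ℚ) * (y.den : ℚ) - (y.num : ℚ) * (x.den : ℚ) = 1 := by
    field_simp at h2
    linear_combination h2 + (y.den : ℚ) * hx - (x.den : ℚ) * hy
  exact_mod_cast this

lemma R1_of_det {x z : ℚ} (hgt : x > z)
    (h : x.num * (z.den : ℤ) - z.num * (x.den : ℤ) = 1) : R1 x z := by
  refine ⟨hgt, ?_⟩
  simp only [Nat.lcm_one_left, Nat.cast_one]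
  have hx : (x.num : ℚ) = x * (x.den : ℚ) := num_eq_self_mul_den x
  have hz : (z.num : ℚ) = z * (z.den : ℚ) := num_eq_self_mul_den z
  have hdx : ((x.den : ℚ)) ≠ 0 := by exact_mod_cast x.den_nz
  have hdz : ((z.den : ℚ)) ≠ 0 := by exact_mod_cast z.den_nz
  have h' : (x.num : ℚ) * (z.den : ℚ) - (z.num : ℚ) * (x.den : ℚ) = 1 := by
    exact_mod_cast h
  rw [eq_div_iff (mul_ne_zero hdx hdz)]
  linear_combination h' - (z.den : ℚ) * hx + (x.den : ℚ) * hz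

/-- `NoSkip l`: no interior vertex can be skipped. -/
def NoSkip (l : List ℚ) : Prop :=
  ∀ pre (x y z : ℚ) post, l = pre ++ x :: y :: z :: post →
    x.num * (z.den : ℤ) - z.num * (x.den : ℤ) ≠ 1

lemma NoSkip.tail {a : ℚ} {l : List ℚ} (h : NoSkip (a :: l)) : NoSkip l := by
  intro pre x y z post hl
  exact h (a :: pre) x y z post (by simp [hl])

/-- Key growth lemma. -/
lemma grow : ∀ (t : List ℚ) (x y : ℚ),
    List.Chain' R1 (x :: y :: t) → NoSkip (x :: y :: t) →
    0 ≤ Fq y → Fq x + 1 ≤ Fq y →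
    Fq x + 1 + t.length ≤ Fq ((x :: y :: t).getLast (by simp)) := by
  intro t
  induction t with
  | nil =>
      intro x y _ _ _ h4
      simpa using h4
  | cons z t ih =>
      intro x y hchain hns hy0 hxy
      have hxy' : R1 x y := hchain.rel_head
      have hchain' : List.Chain' R1 (y :: z :: t) := hchain.tail
      have hyz : R1 y z := hchain'.rel_head
      have e1 : x.num * (y.den : ℤ) - y.num * (x.den : ℤ) = 1 := det_of_R1 hxy'
      have e2 : y.num * (z.den : ℤ) - z.num * (y.den : ℤ) = 1 := det_of_R1 hyz
      set D : ℤ := x.num * (z.den : ℤ) - z.num * (x.den : ℤ) with hD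
      have hDne : D ≠ 1 := hns [] x y z t rfl
      -- D ≥ 1 since x > z
      have hxz : x > z := lt_trans hyz.1 hxy'.1
      have hDpos : 0 < D := by
        have hdx : (0:ℚ) < (x.den : ℚ) := by exact_mod_cast x.pos
        have hdz : (0:ℚ) < (z.den : ℚ) := by exact_mod_cast z.pos
        have hx : (x.num : ℚ) = x * (x.den : ℚ) := num_eq_self_mul_den x
        have hz : (z.num : ℚ) = z * (z.den : ℚ) := num_eq_self_mul_den z
        have : (0:ℚ) < (D : ℚ) := by
          rw [hD]
          push_cast
          rw [hx, hz]
          nlinarith [mul_pos (sub_pos.mpr hxz) (mul_pos hdx hdz)]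
        exact_mod_cast this
      have hD2 : 2 ≤ D := by omega
      -- D * ny = nx + nz and D * dy = dx + dz
      have hnum : D * y.num = x.num + z.num := by linear_combination z.num * e1 + x.num * e2
      have hden : D * (y.den : ℤ) = (x.den : ℤ) + (z.den : ℤ) := by
        linear_combination (z.den : ℤ) * e1 + (x.den : ℤ) * e2
      have hFsum : D * Fq y = Fq x + Fq z := by
        simp only [Fq]; linarith [hnum, hden]
      have hyz' : Fq y + 1 ≤ Fq z := by nlinarith [hFsum, hD2, hy0, hxy]
      have hz0 : 0 ≤ Fq z := by linarith
      have := ih y z hchain' hns.tail hz0 hyz'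
      have hlast : (x :: y :: z :: t).getLast (by simp) = (y :: z :: t).getLast (by simp) := by
        simp [List.getLast_cons]
      rw [hlast]
      simp only [List.length_cons]
      push_cast
      push_cast at this
      linarith

lemma isNPath_one_iff (a a' : ℚ) (l : List ℚ) :
    IsNPath 1 a a' l ↔ (l.head? = some a ∧ l.getLast? = some a' ∧ l.Chain' R1) := Iff.rfl

lemma noSkip_of_shortest {a a' : ℚ} {l : List ℚ}
    (h : IsShortestNPath 1 a a' l) : NoSkip l := by
  rintro pre x y z post rfl hdet
  obtain ⟨hpath, hmin⟩ := h
  rw [isNPath_one_iff] at hpath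
  obtain ⟨hhead, hlast, hchain⟩ := hpath
  obtain ⟨hc1, hxy, hc2⟩ := List.isChain_append_cons_cons.mp hchain
  have hyz : R1 y z := hc2.rel_head
  have hxz : R1 x z := R1_of_det (lt_trans hyz.1 hxy.1) hdet
  have hchain' : List.Chain' R1 (pre ++ x :: z :: post) :=
    List.isChain_append_cons_cons.mpr ⟨hc1, hxz, hc2.tail⟩
  have hhead' : (pre ++ x :: z :: post).head? = some a := by
    cases pre with
    | nil => simpa using hhead
    | cons p ps => simpa using hhead
  have hlast' : (pre ++ x :: z :: post).getLast? = some a' := by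
    have h1 : (pre ++ x :: y :: z :: post).getLast? = (z :: post).getLast? := by
      rw [show pre ++ x :: y :: z :: post = (pre ++ [x, y]) ++ z :: post by simp,
        List.getLast?_append_cons]
    have h2 : (pre ++ x :: z :: post).getLast? = (z :: post).getLast? := by
      rw [show pre ++ x :: z :: post = (pre ++ [x]) ++ z :: post by simp,
        List.getLast?_append_cons]
    rw [h2, ← h1, hlast]
  have hsub : (pre ++ x :: z :: post).Sublist (pre ++ x :: y :: z :: post) := by
    apply List.Sublist.append_left
    exact List.Sublist.cons₂ x (List.sublist_cons_self y (z :: post))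
  have hne : pre ++ x :: z :: post ≠ pre ++ x :: y :: z :: post := by
    intro he
    have := congrArg List.length he
    simp at this
  have hma : a ∈ pre ++ x :: z :: post := by
    rw [List.eq_cons_of_mem_head? hhead']
    exact List.mem_cons_self
  have hma' : a' ∈ pre ++ x :: z :: post := by
    obtain ⟨hne', heq⟩ := List.mem_getLast?_eq_getLast hlast'
    rw [heq]
    exact List.getLast_mem hne'
  exact hmin _ hsub hne hma hma' ((isNPath_one_iff a a' _).mpr ⟨hhead', hlast', hchain'⟩)


/-- Let `b/c` be a rational number in lowest terms with
`0 ≤ b/c < 1` (`b ≥ 0`, `c ≥ 1`, `gcd(b,c) = 1`).  Then every shortest `1`-path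
from `1` to `b/c` has at most `c − b + 1` entries. -/
theorem shortest_one_path_from_one_length_le
    (b c : ℕ) (hc : 0 < c) (hcop : Nat.Coprime b c) (hlt : b < c)
    (l : List ℚ) (hl : IsShortestNPath 1 1 ((b : ℚ) / (c : ℚ)) l) :
    l.length ≤ c - b + 1 := by
  have hns : NoSkip l := noSkip_of_shortest hl
  obtain ⟨hpath, -⟩ := hl
  rw [isNPath_one_iff] at hpath
  obtain ⟨hhead, hlast, hchain⟩ := hpath
  match l, hhead, hlast, hchain, hns with
  | [q], hhead, hlast, hchain, hns => simp
  | (q :: y :: rest'), hhead, hlast, hchain, hns =>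
    have hq : q = 1 := by simpa using hhead
    subst hq
    have hxy : R1 1 y := hchain.rel_head
    have e1 : (1 : ℚ).num * (y.den : ℤ) - y.num * ((1 : ℚ).den : ℤ) = 1 := det_of_R1 hxy
    have hF1 : Fq 1 = 0 := by norm_num [Fq]
    have hFy : Fq y = 1 := by
      simp only [Rat.num_one, Rat.den_one, one_mul, Nat.cast_one, mul_one] at e1
      simp [Fq]; omega
    have hgrow := grow rest' 1 y hchain hns (by omega) (by omega)
    -- identify the last entry
    have hlast2 : ((1 : ℚ) :: y :: rest').getLast (by simp) = (b : ℚ) / (c : ℚ) := by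
      have := List.getLast?_eq_getLast (l := (1 : ℚ) :: y :: rest') (by simp)
      rw [this] at hlast
      exact Option.some_injective _ hlast
    rw [hlast2] at hgrow
    -- compute Fq (b/c)
    have hc0 : (0 : ℤ) < (c : ℤ) := by exact_mod_cast hc
    have hco : Nat.Coprime (b : ℤ).natAbs (c : ℤ).natAbs := by simpa using hcop
    have hcast : ((b : ℚ) / (c : ℚ)) = (((b : ℤ) : ℚ) / ((c : ℤ) : ℚ)) := by push_cast; ring
    have hnum : ((b : ℚ) / (c : ℚ)).num = (b : ℤ) := by
      rw [hcast]; exact Rat.num_div_eq_of_coprime hc0 hco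
    have hden : ((((b : ℚ) / (c : ℚ)).den : ℤ)) = (c : ℤ) := by
      rw [hcast]; exact Rat.den_div_eq_of_coprime hc0 hco
    have hFbc : Fq ((b : ℚ) / (c : ℚ)) = (c : ℤ) - (b : ℤ) := by
      simp [Fq, hnum, hden]
    rw [hFbc, hF1] at hgrow
    simp only [List.length_cons]
    have : (rest'.length : ℤ) + 1 ≤ (c : ℤ) - (b : ℤ) := by linarith
    omega
end

section
/- Let L/K be a finite separable extension inside K̄, let σ ∈ Hom_K(L, K̄) with σ different from the inclusion, and let π_L be a uniformizer of L. Let γ ∈ L and suppose there exists η ∈ K with a := ν_L(γ − η) ≥ 0. Then ν_L(σ(γ) − γ) ≥ ν_L(σ(π_L) − π_L) + a − 1. -/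
section VAux

variable {F : Type*} [Field F] (v : F → ℚ)

open Classical in
/-- Extended valuation with `Vv v 0 = ⊤`. -/
noncomputable def Vv (x : F) : WithTop ℚ := if x = 0 then ⊤ else (v x : WithTop ℚ)

lemma Vv_zero : Vv v (0 : F) = ⊤ := if_pos rfl

lemma Vv_of_ne_zero {x : F} (hx : x ≠ 0) : Vv v x = (v x : WithTop ℚ) := if_neg hx

variable (hv_mul : ∀ x y : F, x ≠ 0 → y ≠ 0 → v (x * y) = v x + v y)
variable (hv_add : ∀ x y : F, x ≠ 0 → y ≠ 0 → x + y ≠ 0 → min (v x) (v y) ≤ v (x + y))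

include hv_mul in
lemma v_one_eq : v (1 : F) = 0 := by
  have h := hv_mul 1 1 one_ne_zero one_ne_zero
  rw [mul_one] at h; linarith

include hv_mul in
lemma v_neg_one : v (-1 : F) = 0 := by
  have h := hv_mul (-1) (-1) (by norm_num) (by norm_num)
  rw [neg_mul_neg, one_mul, v_one_eq v hv_mul] at h; linarith

include hv_mul in
lemma v_neg {x : F} (hx : x ≠ 0) : v (-x) = v x := by
  have h := hv_mul (-1) x (by norm_num) hx
  rw [neg_one_mul, v_neg_one v hv_mul] at h; linarith

include hv_mul in
lemma v_pow {x : F} (hx : x ≠ 0) (e : ℕ) : v (x ^ e) = e * v x := by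
  induction e with
  | zero => simp [v_one_eq v hv_mul]
  | succ n ih =>
      rw [pow_succ, hv_mul _ _ (pow_ne_zero _ hx) hx, ih]
      push_cast; ring

include hv_mul in
lemma Vv_mul (x y : F) : Vv v (x * y) = Vv v x + Vv v y := by
  by_cases hx : x = 0
  · simp [hx, Vv_zero]
  by_cases hy : y = 0
  · simp [hy, Vv_zero]
  rw [Vv_of_ne_zero v hx, Vv_of_ne_zero v hy, Vv_of_ne_zero v (mul_ne_zero hx hy),
    hv_mul x y hx hy]
  push_cast; rfl

include hv_mul hv_add in
lemma Vv_add_ge (x y : F) : min (Vv v x) (Vv v y) ≤ Vv v (x + y) := by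
  by_cases hxy : x + y = 0
  · rw [hxy, Vv_zero]; exact le_top
  by_cases hx : x = 0
  · rw [hx, zero_add] at hxy ⊢; exact min_le_right _ _
  by_cases hy : y = 0
  · rw [hy, add_zero] at hxy ⊢; exact min_le_left _ _
  rw [Vv_of_ne_zero v hx, Vv_of_ne_zero v hy, Vv_of_ne_zero v hxy, ← WithTop.coe_min,
    WithTop.coe_le_coe]
  exact hv_add x y hx hy hxy

include hv_mul in
lemma Vv_neg (x : F) : Vv v (-x) = Vv v x := by
  by_cases hx : x = 0
  · simp [hx]
  rw [Vv_of_ne_zero v hx, Vv_of_ne_zero v (neg_ne_zero.mpr hx), v_neg v hv_mul hx]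

include hv_mul hv_add in
lemma Vv_sub_ge (x y : F) : min (Vv v x) (Vv v y) ≤ Vv v (x - y) := by
  rw [sub_eq_add_neg, ← Vv_neg v hv_mul y]
  exact Vv_add_ge v hv_mul hv_add x (-y)

include hv_mul in
lemma v_prod {ι : Type*} (s : Finset ι) (f : ι → F) (hf : ∀ i ∈ s, f i ≠ 0) :
    v (∏ i ∈ s, f i) = ∑ i ∈ s, v (f i) := by
  classical
  induction s using Finset.induction with
  | empty => simp [v_one_eq v hv_mul]
  | @insert a s ha ih =>
      rw [Finset.prod_insert ha, Finset.sum_insert ha,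
        hv_mul _ _ (hf a (Finset.mem_insert_self a s))
          (Finset.prod_ne_zero_iff.mpr fun i hi => hf i (Finset.mem_insert_of_mem hi)),
        ih fun i hi => hf i (Finset.mem_insert_of_mem hi)]

end VAux

/-- Let `K` be a field, Henselian with respect to a discrete valuation
`ν_K` with algebraically closed residue field, with fixed algebraic closure `Kbar` and
(unique, Galois-invariant) extension `v` of `ν_K`, normalized so that a uniformizer
`πK` satisfies `v πK = 1` and `v` is `ℤ`-valued on `K`; algebraic closedness of the
residue field is expressed by `hv_res`.

Let `L/K` be a finite separable extension inside `Kbar` (an abstract field `L` with a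
`K`-embedding `ιL : L → Kbar`), with normalized valuation `ν_L = [L:K]·ν`, let
`σ ∈ Hom_K(L, Kbar)` differ from the inclusion, and let `π_L` be a uniformizer of `L`.
Let `γ ∈ L` and suppose there exists `η ∈ K` with `a := ν_L(γ − η) ≥ 0`.  Then
`ν_L(σ(γ) − γ) ≥ ν_L(σ(π_L) − π_L) + a − 1` (where a vanishing difference
`σ(γ) = γ` has `ν_L = ∞` and the bound holds trivially). -/
theorem val_sigma_sub_lower_bound
    {K Kbar : Type*} [Field K] [Field Kbar] [Algebra K Kbar] [IsAlgClosure K Kbar]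
    (v : Kbar → ℚ)
    (hv_mul : ∀ x y : Kbar, x ≠ 0 → y ≠ 0 → v (x * y) = v x + v y)
    (hv_add : ∀ x y : Kbar, x ≠ 0 → y ≠ 0 → x + y ≠ 0 → min (v x) (v y) ≤ v (x + y))
    (hv_gal : ∀ (σ : Kbar ≃ₐ[K] Kbar) (x : Kbar), v (σ x) = v x)
    (hv_int : ∀ x : K, x ≠ 0 → ∃ n : ℤ, v (algebraMap K Kbar x) = (n : ℚ))
    (πK : K) (hπK : πK ≠ 0 ∧ v (algebraMap K Kbar πK) = 1)
    (hv_res : ∀ x : Kbar, x ≠ 0 → 0 ≤ v x →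
      ∃ η : K, x = algebraMap K Kbar η ∨ 0 < v (x - algebraMap K Kbar η))
    (L : Type*) [Field L] [Algebra K L] [FiniteDimensional K L]
    [Algebra.IsSeparable K L]
    (ιL : L →ₐ[K] Kbar)
    (σ : L →ₐ[K] Kbar) (hσ : σ ≠ ιL)
    (πL : L) (hπL : (Module.finrank K L : ℚ) * v (ιL πL) = 1)
    (γ : L) (η : K) (hγη : γ ≠ algebraMap K L η)
    (a : ℚ) (ha : (Module.finrank K L : ℚ) * v (ιL (γ - algebraMap K L η)) = a)
    (ha0 : 0 ≤ a) :
    σ γ = ιL γ ∨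
      (Module.finrank K L : ℚ) * v (σ πL - ιL πL) + a - 1
        ≤ (Module.finrank K L : ℚ) * v (σ γ - ιL γ) := by
  classical
  set n := Module.finrank K L with hn
  have hn0 : 0 < n := Module.finrank_pos
  have hnQ : (0:ℚ) < n := by exact_mod_cast hn0
  haveI : IsAlgClosed Kbar := IsAlgClosure.isAlgClosed K
  -- maps of nonzero elements are nonzero
  have hmapne : ∀ (τ : L →ₐ[K] Kbar) {x : L}, x ≠ 0 → τ x ≠ 0 := by
    intro τ x hx h
    exact hx (τ.toRingHom.injective (by simp [h]))
  -- invariance of v under all K-embeddings of L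
  have hinv : ∀ (τ : L →ₐ[K] Kbar) (x : L), v (τ x) = v (ιL x) := by
    intro τ x
    have halg : IsAlgebraic K (ιL x) := Algebra.IsAlgebraic.isAlgebraic (ιL x)
    have hev : (Polynomial.aeval (τ x)) (minpoly K (ιL x)) = 0 := by
      rw [minpoly.algHom_eq ιL ιL.toRingHom.injective x,
        Polynomial.aeval_algHom_apply τ x (minpoly K x), minpoly.aeval, map_zero]
    obtain ⟨ψ, hψ⟩ := minpoly.exists_algEquiv_of_root (K := K) (L := Kbar) halg hev
    rw [← hψ, hv_gal]
  have hVinv : ∀ (τ : L →ₐ[K] Kbar) (x : L), Vv v (τ x) = Vv v (ιL x) := by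
    intro τ x
    by_cases hx : x = 0
    · simp [hx]
    · rw [Vv_of_ne_zero v (hmapne τ hx), Vv_of_ne_zero v (hmapne ιL hx), hinv]
  -- integrality of n * v on L
  have hint : ∀ x : L, x ≠ 0 → ∃ m : ℤ, (n:ℚ) * v (ιL x) = m := by
    intro x hx
    have hnorm := Algebra.norm_eq_prod_embeddings K Kbar (x := x)
    have h0 : Algebra.norm K x ≠ 0 := Algebra.norm_ne_zero_iff.mpr hx
    obtain ⟨m, hm⟩ := hv_int _ h0
    refine ⟨m, ?_⟩
    rw [hnorm] at hm
    rw [v_prod v hv_mul Finset.univ _ (fun τ _ => hmapne τ hx)] at hm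
    have hsum : ∑ τ : L →ₐ[K] Kbar, v (τ x) = (n:ℚ) * v (ιL x) := by
      rw [Finset.sum_congr rfl (fun τ _ => hinv τ x), Finset.sum_const, Finset.card_univ,
        AlgHom.card (F := K) (E := L) Kbar, nsmul_eq_mul, hn]
    rw [← hsum, hm]
  -- settle the trivial disjunct
  by_cases hγσ : σ γ = ιL γ
  · exact Or.inl hγσ
  right
  set δ := γ - algebraMap K L η with hδdef
  have hδ0 : δ ≠ 0 := sub_ne_zero.mpr hγη
  have hσδ : σ δ - ιL δ = σ γ - ιL γ := by
    rw [hδdef, map_sub, map_sub, AlgHom.commutes, AlgHom.commutes]; ring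
  have hvδ : v (ιL δ) = a / n := by rw [eq_div_iff hnQ.ne']; linarith [ha]
  have hvδ0 : 0 ≤ v (ιL δ) := by rw [hvδ]; exact div_nonneg ha0 hnQ.le
  have hne : σ δ - ιL δ ≠ 0 := by rw [hσδ]; exact sub_ne_zero.mpr hγσ
  by_cases hπ0 : πL = 0
  · -- degenerate uniformizer: then v 0 = 1/n and the bound is just `a ≤ n V`
    rw [hπ0, map_zero] at hπL
    have hmin := hv_add (σ δ) (-(ιL δ)) (hmapne σ hδ0) (neg_ne_zero.mpr (hmapne ιL hδ0))
      (by rw [← sub_eq_add_neg]; exact hne)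
    rw [← sub_eq_add_neg, hσδ, v_neg v hv_mul (hmapne ιL hδ0), hinv σ δ, min_self] at hmin
    have h1 : a / n ≤ v (σ γ - ιL γ) := by rw [← hvδ]; exact hmin
    have h2 := mul_le_mul_of_nonneg_left h1 hnQ.le
    rw [mul_div_cancel₀ _ hnQ.ne'] at h2
    rw [hπ0]
    simp only [map_zero, sub_self]
    calc (n:ℚ) * v 0 + a - 1 = a := by linarith [hπL]
      _ ≤ (n:ℚ) * v (σ γ - ιL γ) := h2
  -- main case : πL ≠ 0
  have hπι : ιL πL ≠ 0 := hmapne ιL hπ0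
  have hvπ : v (ιL πL) = 1 / n := by rw [eq_div_iff hnQ.ne']; linarith [hπL]
  set B := Vv v (σ πL - ιL πL) with hBdef
  have hVπ : Vv v (σ πL) = ((1/n : ℚ) : WithTop ℚ) := by
    rw [hVinv σ πL, Vv_of_ne_zero v hπι, hvπ]
  -- bound for powers of the uniformizer
  have hpow : ∀ e : ℕ, 1 ≤ e →
      B + (((e:ℚ) - 1)/n : ℚ) ≤ Vv v (σ (πL ^ e) - ιL (πL ^ e)) := by
    intro e he
    induction e, he using Nat.le_induction with
    | base => simp [pow_one, hBdef]
    | succ e he ih =>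
      have hid : σ (πL ^ (e+1)) - ιL (πL ^ (e+1)) =
          σ πL * (σ (πL ^ e) - ιL (πL ^ e)) + (σ πL - ιL πL) * ιL (πL ^ e) := by
        rw [map_pow, map_pow, map_pow, map_pow]; ring
      rw [hid, show ((((e+1:ℕ):ℚ) - 1)/(n:ℚ)) = (((e:ℚ) + 1 - 1)/(n:ℚ)) from by push_cast; ring]
      refine le_trans (le_min ?_ ?_) (Vv_add_ge v hv_mul hv_add _ _)
      · rw [Vv_mul v hv_mul, hVπ]
        have harith : (((e:ℚ) + 1 - 1)/n : ℚ) = (1/n : ℚ) + (((e:ℚ) - 1)/n : ℚ) := by ring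
        calc B + ((((e:ℚ) + 1 - 1)/n : ℚ) : WithTop ℚ)
            = ((1/n:ℚ) : WithTop ℚ) + (B + (((e:ℚ) - 1)/n : ℚ)) := by
              rw [harith, WithTop.coe_add]; abel
          _ ≤ ((1/n:ℚ) : WithTop ℚ) + Vv v (σ (πL ^ e) - ιL (πL ^ e)) := by
              exact add_le_add_right ih _
      · rw [Vv_mul v hv_mul, map_pow, Vv_of_ne_zero v (pow_ne_zero _ hπι),
          v_pow v hv_mul hπι, hvπ]
        apply le_of_eq
        congr 1
        rw [mul_one_div]
        push_cast
        ring
  -- main induction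
  have key : ∀ j : ℕ, ∀ δ' : L, δ' ≠ 0 → 0 ≤ v (ιL δ') →
      min (B + ((v (ιL δ') - 1/n : ℚ) : WithTop ℚ)) ((v (ιL δ') + (j:ℚ)/n : ℚ) : WithTop ℚ)
        ≤ Vv v (σ δ' - ιL δ') := by
    intro j
    induction j with
    | zero =>
      intro δ' hδ' hv0
      refine le_trans (min_le_right _ _) ?_
      have hs := Vv_sub_ge v hv_mul hv_add (σ δ') (ιL δ')
      rw [hVinv σ δ', min_self, Vv_of_ne_zero v (hmapne ιL hδ')] at hs
      refine le_trans (le_of_eq ?_) hs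
      norm_num
    | succ j ih =>
      intro δ' hδ' hv0
      obtain ⟨m, hm⟩ := hint δ' hδ'
      have hm0 : 0 ≤ m := by
        have : (0:ℚ) ≤ m := by rw [← hm]; exact mul_nonneg hnQ.le hv0
        exact_mod_cast this
      set e := m.toNat with hedef
      have he : (e:ℚ) = (n:ℚ) * v (ιL δ') := by
        rw [hm, hedef]
        exact_mod_cast congrArg (Int.cast : ℤ → ℚ) (Int.toNat_of_nonneg hm0)
      have hve : v (ιL δ') = (e:ℚ) / n := by rw [eq_div_iff hnQ.ne']; linarith [he]
      set x := ιL (δ' / πL ^ e) with hx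
      have hxval : ιL δ' = x * (ιL πL) ^ e := by
        rw [hx, ← map_pow, ← map_mul, div_mul_cancel₀ _ (pow_ne_zero _ hπ0)]
      have hx0 : x ≠ 0 := hmapne ιL (div_ne_zero hδ' (pow_ne_zero _ hπ0))
      have hvx : v x = 0 := by
        have h1 := hv_mul x ((ιL πL) ^ e) hx0 (pow_ne_zero _ hπι)
        rw [← hxval, v_pow v hv_mul hπι, hvπ, mul_one_div, hve] at h1
        linarith
      obtain ⟨c, hc⟩ := hv_res x hx0 (le_of_eq hvx.symm)
      set cK := algebraMap K L c with hcK
      set cB := algebraMap K Kbar c with hcB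
      have hιc : ιL cK = cB := ιL.commutes c
      have hσc : σ cK = cB := σ.commutes c
      -- bound on the "T" term
      have hTbound : ((0:ℚ) : WithTop ℚ) ≤ Vv v cB →
          B + ((v (ιL δ') - 1/n : ℚ) : WithTop ℚ)
            ≤ Vv v (cB * (σ (πL ^ e) - ιL (πL ^ e))) := by
        intro h0
        by_cases hT2 : σ (πL ^ e) - ιL (πL ^ e) = 0
        · rw [hT2, mul_zero, Vv_zero]; exact le_top
        · have he1 : 1 ≤ e := by
            rcases Nat.eq_zero_or_pos e with h | h
            · exact absurd (by rw [h]; simp : σ (πL ^ e) - ιL (πL ^ e) = 0) hT2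
            · exact h
          rw [Vv_mul v hv_mul]
          calc B + ((v (ιL δ') - 1/n : ℚ) : WithTop ℚ)
              = B + ((((e:ℚ) - 1)/n : ℚ) : WithTop ℚ) := by
                rw [hve, div_sub_div_same]
            _ ≤ Vv v (σ (πL ^ e) - ιL (πL ^ e)) := hpow e he1
            _ = 0 + Vv v (σ (πL ^ e) - ιL (πL ^ e)) := (zero_add _).symm
            _ ≤ Vv v cB + Vv v (σ (πL ^ e) - ιL (πL ^ e)) := by
                refine add_le_add_left ?_ _
                simpa using h0
      by_cases hδeq : δ' = cK * πL ^ e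
      · -- exact expansion: δ' = c ⬝ πL^e
        have hx_eq : x = cB := by
          have h1 : x * (ιL πL) ^ e = cB * (ιL πL) ^ e := by
            rw [← hxval, hδeq, map_mul, hιc, map_pow]
          exact mul_right_cancel₀ (pow_ne_zero _ hπι) h1
        have h0 : ((0:ℚ) : WithTop ℚ) ≤ Vv v cB := by
          rw [← hx_eq, Vv_of_ne_zero v hx0, hvx]
        have hTδ : σ δ' - ιL δ' = cB * (σ (πL ^ e) - ιL (πL ^ e)) := by
          rw [hδeq, map_mul, map_mul, hσc, hιc]; ring
        rw [hTδ]
        exact le_trans (min_le_left _ _) (hTbound h0)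
      · set δ'' := δ' - cK * πL ^ e with hδ''def
        have hδ''0 : δ'' ≠ 0 := sub_ne_zero.mpr hδeq
        have hιδ'' : ιL δ'' = (ιL πL) ^ e * (x - cB) := by
          rw [hδ''def, map_sub, map_mul, hιc, map_pow, hxval]; ring
        have hxc : x - cB ≠ 0 := by
          intro h
          apply hδ''0
          apply ιL.toRingHom.injective
          rw [show ιL.toRingHom δ'' = ιL δ'' from rfl, hιδ'', h, mul_zero, map_zero]
        have hvxc : 0 < v (x - cB) := by
          rcases hc with h | h
          · exact absurd (sub_eq_zero_of_eq h) hxc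
          · exact h
        have hvδ'' : v (ιL δ'') = (e:ℚ)/n + v (x - cB) := by
          rw [hιδ'', hv_mul _ _ (pow_ne_zero _ hπι) hxc, v_pow v hv_mul hπι, hvπ, mul_one_div]
        have hvδ''0 : 0 ≤ v (ιL δ'') := by
          rw [hvδ'']
          have : (0:ℚ) ≤ (e:ℚ)/n := div_nonneg (Nat.cast_nonneg e) hnQ.le
          linarith
        obtain ⟨m', hm'⟩ := hint δ'' hδ''0
        have hstep : v (ιL δ') + 1/n ≤ v (ιL δ'') := by
          have h1 : (m:ℚ) < m' := by
            rw [← hm, ← hm']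
            apply mul_lt_mul_of_pos_left ?_ hnQ
            rw [hvδ'', hve]
            linarith
          have h2 : m + 1 ≤ m' := by exact_mod_cast h1
          have h3 : (m:ℚ) + 1 ≤ m' := by exact_mod_cast h2
          rw [← hm, ← hm'] at h3
          have h4 : (n:ℚ) * (v (ιL δ') + 1/n) ≤ (n:ℚ) * v (ιL δ'') := by
            have : (n:ℚ) * (v (ιL δ') + 1/n) = n * v (ιL δ') + 1 := by
              field_simp
            rw [this]; linarith
          exact le_of_mul_le_mul_left h4 hnQ
        have hIH := ih δ'' hδ''0 hvδ''0
        have hsum : σ δ' - ιL δ' =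
            cB * (σ (πL ^ e) - ιL (πL ^ e)) + (σ δ'' - ιL δ'') := by
          rw [hδ''def, map_sub, map_sub, map_mul, map_mul, hσc, hιc]; ring
        rw [hsum]
        refine le_trans (le_min ?_ ?_) (Vv_add_ge v hv_mul hv_add _ _)
        · by_cases hc0 : cB = 0
          · rw [hc0, zero_mul, Vv_zero]; exact le_top
          · have h0 : ((0:ℚ) : WithTop ℚ) ≤ Vv v cB := by
              have hcx : cB = x - (x - cB) := by ring
              have hmin := Vv_sub_ge v hv_mul hv_add x (x - cB)
              rw [← hcx, Vv_of_ne_zero v hx0, hvx, Vv_of_ne_zero v hxc] at hmin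
              exact le_trans (le_min (le_refl _) (WithTop.coe_le_coe.mpr hvxc.le)) hmin
            exact le_trans (min_le_left _ _) (hTbound h0)
        · refine le_trans (le_min ?_ ?_) hIH
          · refine le_trans (min_le_left _ _) (add_le_add_right ?_ B)
            exact WithTop.coe_le_coe.mpr (by linarith)
          · refine le_trans (min_le_right _ _) (WithTop.coe_le_coe.mpr ?_)
            push_cast
            rw [add_div]
            linarith
  -- conclusion
  obtain ⟨j, hj⟩ := exists_nat_gt ((n:ℚ) * v (σ γ - ιL γ) - a)
  have hk := key j δ hδ0 hvδ0
  rw [hσδ, Vv_of_ne_zero v (sub_ne_zero.mpr hγσ), hvδ] at hk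
  set V := v (σ γ - ιL γ) with hV
  have h2 : V < a/n + (j:ℚ)/n := by
    have hlt : (n:ℚ) * V < (n:ℚ) * (a/n + (j:ℚ)/n) := by
      rw [mul_add, mul_div_cancel₀ _ hnQ.ne', mul_div_cancel₀ _ hnQ.ne']
      linarith
    exact lt_of_mul_lt_mul_left hlt hnQ.le
  have h3 : B + ((a/n - 1/n : ℚ) : WithTop ℚ) ≤ ((V:ℚ) : WithTop ℚ) := by
    rcases min_le_iff.mp hk with h | h
    · exact h
    · exact absurd (lt_of_le_of_lt (WithTop.coe_le_coe.mp h) h2) (lt_irrefl _)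
  have hBne : σ πL - ιL πL ≠ 0 := by
    intro h
    rw [hBdef, h, Vv_zero, top_add] at h3
    exact absurd h3 (by simp)
  rw [hBdef, Vv_of_ne_zero v hBne, ← WithTop.coe_add] at h3
  have hr : v (σ πL - ιL πL) + (a/n - 1/n) ≤ V := WithTop.coe_le_coe.mp h3
  have h5 := mul_le_mul_of_nonneg_left hr hnQ.le
  have hexp : (n:ℚ) * (v (σ πL - ιL πL) + (a/n - 1/n)) = n * v (σ πL - ιL πL) + a - 1 := by
    field_simp
    ring
  rw [hexp] at h5
  exact h5
end

section
/- Let α ∈ K^sep with [K(α):K] = d, and suppose α lies in the valuation ring of K(α) with a := ν_{K(α)}(α) (a non-negative integer). Then db_K(α) ≥ (d − 1)(a − 1). -/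
open Polynomial Finset
open scoped Classical

section Aux

variable {Kbar : Type*} [Field Kbar] {v : Kbar → ℚ}

theorem aux_v_one
    (hv_mul : ∀ x y : Kbar, x ≠ 0 → y ≠ 0 → v (x * y) = v x + v y) : v (1 : Kbar) = 0 := by
  have h := hv_mul 1 1 one_ne_zero one_ne_zero
  rw [mul_one] at h
  linarith

theorem aux_v_neg
    (hv_mul : ∀ x y : Kbar, x ≠ 0 → y ≠ 0 → v (x * y) = v x + v y)
    {x : Kbar} (hx : x ≠ 0) : v (-x) = v x := by
  have hm1 : v (-1 : Kbar) = 0 := by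
    have h := hv_mul (-1) (-1) (by norm_num) (by norm_num)
    rw [neg_mul_neg, one_mul] at h
    have := aux_v_one hv_mul
    linarith
  have h := hv_mul (-1) x (by norm_num) hx
  rw [neg_one_mul] at h
  rw [h, hm1, zero_add]

theorem aux_v_pow
    (hv_mul : ∀ x y : Kbar, x ≠ 0 → y ≠ 0 → v (x * y) = v x + v y)
    {x : Kbar} (hx : x ≠ 0) (n : ℕ) : v (x ^ n) = (n : ℚ) * v x := by
  induction n with
  | zero => simpa using aux_v_one hv_mul
  | succ n ih =>
    rw [pow_succ, hv_mul _ _ (pow_ne_zero _ hx) hx, ih]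
    push_cast; ring

theorem aux_v_add_eq_min
    (hv_mul : ∀ x y : Kbar, x ≠ 0 → y ≠ 0 → v (x * y) = v x + v y)
    (hv_add : ∀ x y : Kbar, x ≠ 0 → y ≠ 0 → x + y ≠ 0 → min (v x) (v y) ≤ v (x + y))
    (x y : Kbar) (hx : x ≠ 0) (hy : y ≠ 0) (hne : v x ≠ v y) :
    x + y ≠ 0 ∧ v (x + y) = min (v x) (v y) := by
  have hxy : x + y ≠ 0 := by
    intro h
    have : y = -x := by linear_combination h
    rw [this, aux_v_neg hv_mul hx] at hne
    exact hne rfl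
  refine ⟨hxy, ?_⟩
  have h1 : min (v x) (v y) ≤ v (x + y) := hv_add x y hx hy hxy
  -- show the other inequality
  have key : ∀ z w : Kbar, z ≠ 0 → w ≠ 0 → z + w ≠ 0 → v z < v w → v (z + w) ≤ v z := by
    intro z w hz hw hzw hlt
    have h2 := hv_add (z + w) (-w) hzw (neg_ne_zero.2 hw) (by
      rw [add_neg_cancel_right]; exact hz)
    rw [add_neg_cancel_right, aux_v_neg hv_mul hw] at h2
    rcases min_le_iff.mp h2 with h | h
    · exact h
    · linarith
  rcases lt_trichotomy (v x) (v y) with h | h | h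
  · rw [min_eq_left h.le]
    exact le_antisymm (key x y hx hy hxy h) (by rw [min_eq_left h.le] at h1; exact h1)
  · exact absurd h hne
  · rw [min_eq_right h.le]
    have := key y x hy hx (by rwa [add_comm]) h
    rw [add_comm] at this
    exact le_antisymm this (by rw [min_eq_right h.le] at h1; exact h1)

theorem aux_v_sum_ge
    (hv_add : ∀ x y : Kbar, x ≠ 0 → y ≠ 0 → x + y ≠ 0 → min (v x) (v y) ≤ v (x + y))
    {ι : Type*} (s : Finset ι) (f : ι → Kbar) (b : ℚ)
    (hb : ∀ i ∈ s, f i = 0 ∨ b ≤ v (f i)) (hs : ∑ i ∈ s, f i ≠ 0) :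
    b ≤ v (∑ i ∈ s, f i) := by
  classical
  induction s using Finset.induction_on with
  | empty => simp at hs
  | @insert a s ha ih =>
    rw [Finset.sum_insert ha] at hs ⊢
    by_cases h0 : f a = 0
    · rw [h0, zero_add] at hs ⊢
      exact ih (fun i hi => hb i (Finset.mem_insert_of_mem hi)) hs
    by_cases hs0 : ∑ i ∈ s, f i = 0
    · rw [hs0, add_zero]
      exact (hb a (Finset.mem_insert_self a s)).resolve_left h0
    · have h := hv_add (f a) (∑ i ∈ s, f i) h0 hs0 hs
      refine le_trans (le_min ?_ ?_) h
      · exact (hb a (Finset.mem_insert_self a s)).resolve_left h0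
      · exact ih (fun i hi => hb i (Finset.mem_insert_of_mem hi)) hs0

theorem aux_v_sum_distinct
    (hv_mul : ∀ x y : Kbar, x ≠ 0 → y ≠ 0 → v (x * y) = v x + v y)
    (hv_add : ∀ x y : Kbar, x ≠ 0 → y ≠ 0 → x + y ≠ 0 → min (v x) (v y) ≤ v (x + y))
    {ι : Type*} (s : Finset ι) (f : ι → Kbar) :
    s.Nonempty → (∀ i ∈ s, f i ≠ 0) →
    (∀ i ∈ s, ∀ j ∈ s, i ≠ j → v (f i) ≠ v (f j)) →
    (∑ i ∈ s, f i) ≠ 0 ∧ (∃ i ∈ s, v (∑ j ∈ s, f j) = v (f i)) ∧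
      ∀ i ∈ s, v (∑ j ∈ s, f j) ≤ v (f i) := by
  classical
  induction s using Finset.cons_induction with
  | empty => rintro ⟨x, hx⟩; simp at hx
  | cons a t hat ih =>
    intro _ h0 hdist
    rcases t.eq_empty_or_nonempty with rfl | htne
    · simp only [Finset.sum_cons, Finset.sum_empty, add_zero]
      refine ⟨h0 a (by simp), ⟨a, by simp⟩, ?_⟩
      intro i hi
      have : i = a := by simpa using hi
      subst this
      exact le_refl _
    · obtain ⟨ht0, ⟨i0, hi0, hv0⟩, hle⟩ := ih htne
        (fun i hi => h0 i (Finset.mem_cons_of_mem hi))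
        (fun i hi j hj hij => hdist i (Finset.mem_cons_of_mem hi) j
          (Finset.mem_cons_of_mem hj) hij)
      have hfa : f a ≠ 0 := h0 a (Finset.mem_cons_self a t)
      have hvne : v (f a) ≠ v (∑ j ∈ t, f j) := by
        rw [hv0]
        exact hdist a (Finset.mem_cons_self a t) i0 (Finset.mem_cons_of_mem hi0)
          (by rintro rfl; exact hat hi0)
      obtain ⟨hsum0, hmin⟩ := aux_v_add_eq_min hv_mul hv_add (f a) (∑ j ∈ t, f j) hfa ht0 hvne
      rw [Finset.sum_cons]
      refine ⟨hsum0, ?_, ?_⟩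
      · rcases min_cases (v (f a)) (v (∑ j ∈ t, f j)) with ⟨h, _⟩ | ⟨h, _⟩
        · exact ⟨a, Finset.mem_cons_self a t, by rw [hmin, h]⟩
        · exact ⟨i0, Finset.mem_cons_of_mem hi0, by rw [hmin, h, hv0]⟩
      · intro i hi
        rcases Finset.mem_cons.mp hi with rfl | hi'
        · rw [hmin]; exact min_le_left _ _
        · rw [hmin]; exact le_trans (min_le_right _ _) (hle i hi')

theorem aux_v_multiset_prod
    (hv_mul : ∀ x y : Kbar, x ≠ 0 → y ≠ 0 → v (x * y) = v x + v y)
    (s : Multiset Kbar) :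
    (∀ x ∈ s, x ≠ 0) → s.prod ≠ 0 ∧ v s.prod = (s.map v).sum := by
  induction s using Multiset.induction_on with
  | empty =>
    intro _
    refine ⟨by simp, ?_⟩
    simpa using aux_v_one hv_mul
  | cons a s ih =>
    intro h
    obtain ⟨hp, hv⟩ := ih (fun x hx => h x (Multiset.mem_cons_of_mem hx))
    have ha : a ≠ 0 := h a (Multiset.mem_cons_self a s)
    constructor
    · rw [Multiset.prod_cons]; exact mul_ne_zero ha hp
    · rw [Multiset.prod_cons, hv_mul a _ ha hp, hv, Multiset.map_cons, Multiset.sum_cons]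

end Aux

/-- Let `K` be a field, Henselian with respect to a discrete valuation
`ν_K` with algebraically closed residue field, with fixed algebraic closure `Kbar` and
(unique, Galois-invariant) extension `v` of `ν_K`, normalized so that a uniformizer
`πK` satisfies `v πK = 1` and `v` is `ℤ`-valued on `K`; algebraic closedness of the
residue field is expressed by `hv_res`.

Let `α ∈ K^sep` with `[K(α):K] = d` (realized by an abstract field `L = K(α)` with
`K`-embedding `ιL : L → Kbar` and generator `αL ↦ α`), and suppose `α` lies in the
valuation ring of `K(α)` with `a := ν_{K(α)}(α)` a non-negative integer
(`ν_{K(α)} = [L:K]·ν`).  Then `db_K(α) ≥ (d − 1)(a − 1)`, where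
`db_K(α) := Σ_{σ≠τ ∈ Hom_K(L,Kbar)} ν(σ(α) − τ(α)) − Σ_{σ≠τ} ν(σ(π_L) − τ(π_L))`
for a uniformizer `π_L` of `L`. -/
theorem discriminant_bonus_ge
    {K Kbar : Type*} [Field K] [Field Kbar] [Algebra K Kbar] [IsAlgClosure K Kbar]
    (v : Kbar → ℚ)
    (hv_mul : ∀ x y : Kbar, x ≠ 0 → y ≠ 0 → v (x * y) = v x + v y)
    (hv_add : ∀ x y : Kbar, x ≠ 0 → y ≠ 0 → x + y ≠ 0 → min (v x) (v y) ≤ v (x + y))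
    (hv_gal : ∀ (σ : Kbar ≃ₐ[K] Kbar) (x : Kbar), v (σ x) = v x)
    (hv_int : ∀ x : K, x ≠ 0 → ∃ n : ℤ, v (algebraMap K Kbar x) = (n : ℚ))
    (πK : K) (hπK : πK ≠ 0 ∧ v (algebraMap K Kbar πK) = 1)
    (hv_res : ∀ x : Kbar, x ≠ 0 → 0 ≤ v x →
      ∃ η : K, x = algebraMap K Kbar η ∨ 0 < v (x - algebraMap K Kbar η))
    (α : Kbar) (hα0 : α ≠ 0) (hsep : (minpoly K α).Separable)
    (L : Type*) [Field L] [Algebra K L] [FiniteDimensional K L]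
    (ιL : L →ₐ[K] Kbar)
    (αL : L) (hαL : ιL αL = α) (hgen : Algebra.adjoin K {αL} = ⊤)
    (d : ℕ) (hd : Module.finrank K L = d)
    (a : ℕ) (ha : (d : ℚ) * v α = (a : ℚ))
    (πL : L) (hπL : (d : ℚ) * v (ιL πL) = 1) :
    ((d : ℚ) - 1) * ((a : ℚ) - 1) ≤
      (∑ p ∈ (univ : Finset ((L →ₐ[K] Kbar) × (L →ₐ[K] Kbar))).filter
          (fun p => p.1 ≠ p.2), v (p.1 αL - p.2 αL))
      - (∑ p ∈ (univ : Finset ((L →ₐ[K] Kbar) × (L →ₐ[K] Kbar))).filter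
          (fun p => p.1 ≠ p.2), v (p.1 πL - p.2 πL)) := by
  classical
  haveI : IsAlgClosed Kbar := IsAlgClosure.isAlgClosed K
  haveI : Algebra.IsAlgebraic K Kbar := IsAlgClosure.isAlgebraic
  have hd0 : 0 < d := hd ▸ Module.finrank_pos
  have hdq : (d : ℚ) ≠ 0 := Nat.cast_ne_zero.2 hd0.ne'
  -- conjugate elements have equal valuation
  have vconj : ∀ x y : Kbar, minpoly K x = minpoly K y → v x = v y := by
    intro x y h
    obtain ⟨g, hg⟩ := IsConjRoot.exists_algEquiv (K := K) (L := Kbar) (h : IsConjRoot K x y)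
    rw [← hg, hv_gal]
  have vhom : ∀ (σ : L →ₐ[K] Kbar) (x : L), v (σ x) = v (ιL x) := by
    intro σ x
    exact vconj _ _ (by rw [minpoly.algHom_eq σ σ.injective, minpoly.algHom_eq ιL ιL.injective])
  have hvα : v α = a / d := by rw [eq_div_iff hdq]; linarith
  have hvβ : v (ιL πL) = 1 / d := by rw [eq_div_iff hdq]; linarith
  have hαL0 : αL ≠ 0 := by
    intro h
    exact hα0 (by rw [← hαL, h, map_zero])
  -- cardinality of embeddings
  have hintα : IsIntegral K αL := IsIntegral.of_finite K αL
  let eα : (Algebra.adjoin K ({αL} : Set L)) ≃ₐ[K] L :=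
    (Subalgebra.equivOfEq _ _ hgen).trans Subalgebra.topEquiv
  let pbα : PowerBasis K L := (Algebra.adjoin.powerBasis' hintα).map eα
  have hpbαgen : pbα.gen = αL := by
    simp [pbα, eα, PowerBasis.map_gen, Algebra.adjoin.powerBasis'_gen]
  have hminαL : minpoly K αL = minpoly K α := by
    rw [← hαL, minpoly.algHom_eq ιL ιL.injective]
  have hsepαL : IsSeparable K αL := by
    have : (minpoly K αL).Separable := hminαL ▸ hsep
    exact this
  have hcardE : Fintype.card (L →ₐ[K] Kbar) = d := by
    have h1 := AlgHom.card_of_powerBasis (L := Kbar) pbα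
      (by rw [hpbαgen]; exact hsepαL) (IsAlgClosed.splits _)
    have h2 : pbα.dim = d := by rw [← PowerBasis.finrank pbα, hd]
    rw [← h2, ← h1]
    congr!
  -- the key per-pair estimate
  have hαLne : ∀ σ τ : L →ₐ[K] Kbar, σ ≠ τ → σ αL ≠ τ αL := by
    intro σ τ hστ h
    apply hστ
    have hle : Algebra.adjoin K ({αL} : Set L) ≤ AlgHom.equalizer σ τ :=
      Algebra.adjoin_le (Set.singleton_subset_iff.2 h)
    rw [hgen] at hle
    exact AlgHom.ext fun x => hle Algebra.mem_top
  have pairbound : ∀ σ τ : L →ₐ[K] Kbar, σ ≠ τ →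
      ((a : ℚ) - 1) / d ≤ v (σ αL - τ αL) - v (σ πL - τ πL) := by
    have hvσα : ∀ σ : L →ₐ[K] Kbar, v (σ αL) = (a : ℚ) / d := by
      intro σ; rw [vhom σ αL, hαL, hvα]
    have hσα0 : ∀ σ : L →ₐ[K] Kbar, σ αL ≠ 0 :=
      fun σ => (map_ne_zero_iff σ σ.injective).2 hαL0
    by_cases hπ0 : πL = 0
    · -- degenerate case : πL = 0
      intro σ τ hστ
      have h0 : v (0 : Kbar) = 1 / d := by
        rw [eq_div_iff hdq]
        rw [hπ0, map_zero] at hπL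
        linarith
      have hστα := hαLne σ τ hστ
      have hmin : (a : ℚ) / d ≤ v (σ αL - τ αL) := by
        have h := hv_add (σ αL) (-(τ αL)) (hσα0 σ) (neg_ne_zero.2 (hσα0 τ))
          (by rw [← sub_eq_add_neg]; exact sub_ne_zero.2 hστα)
        rw [← sub_eq_add_neg, aux_v_neg hv_mul (hσα0 τ), hvσα σ, hvσα τ, min_self] at h
        exact h
      have hz : σ πL - τ πL = 0 := by rw [hπ0, map_zero, map_zero, sub_zero]
      rw [hz, h0]
      have e1 : ((a : ℚ) - 1) / d = (a : ℚ) / d - 1 / d := by ring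
      linarith
    · -- main case : πL ≠ 0
      have hβ0 : ιL πL ≠ 0 := (map_ne_zero_iff ιL ιL.injective).2 hπ0
      have hintπ : IsIntegral K πL := IsIntegral.of_finite K πL
      have hminπ : minpoly K (ιL πL) = minpoly K πL := minpoly.algHom_eq ιL ιL.injective πL
      set m := (minpoly K πL).natDegree with hm
      have hm_pos : 0 < m := minpoly.natDegree_pos hintπ
      have hm_le : m ≤ d := hd ▸ minpoly.natDegree_le πL
      set P := (minpoly K πL).map (algebraMap K Kbar) with hP
      have hPmon : P.Monic := (minpoly.monic hintπ).map _
      have hsplits : P.Splits := IsAlgClosed.splits _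
      have hPdeg : P.natDegree = m := Polynomial.natDegree_map _
      have hroots_card : P.roots.card = m := by
        rw [← hPdeg]
        exact (Polynomial.splits_iff_card_roots.mp hsplits)
      have hrootv : ∀ r ∈ P.roots, r ≠ 0 ∧ v r = 1 / d := by
        intro r hr
        have haev : (Polynomial.aeval r) (minpoly K πL) = 0 := by
          have h1 := Polynomial.isRoot_of_mem_roots hr
          rwa [Polynomial.IsRoot, hP, Polynomial.eval_map, ← Polynomial.aeval_def] at h1
        have hminr : minpoly K r = minpoly K πL :=
          (minpoly.eq_of_irreducible_of_monic (minpoly.irreducible hintπ) haev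
            (minpoly.monic hintπ)).symm
        have hr0 : r ≠ 0 := by
          rintro rfl
          apply minpoly.coeff_zero_ne_zero hintπ hπ0
          have h2 : (Polynomial.aeval (0 : Kbar)) (minpoly K πL)
              = algebraMap K Kbar ((minpoly K πL).coeff 0) := by
            rw [Polynomial.aeval_def, Polynomial.eval₂_at_zero]
          rw [haev] at h2
          exact (map_eq_zero_iff _ (algebraMap K Kbar).injective).mp h2.symm
        exact ⟨hr0, by rw [vconj r (ιL πL) (hminr.trans hminπ.symm), hvβ]⟩
      have hneg1 : v (-1 : Kbar) = 0 := by
        have h := aux_v_neg hv_mul (one_ne_zero : (1 : Kbar) ≠ 0)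
        rwa [aux_v_one hv_mul] at h
      have hmd : m = d := by
        obtain ⟨hprod0, hprodv⟩ := aux_v_multiset_prod hv_mul P.roots
          (fun x hx => (hrootv x hx).1)
        have hvroots : v P.roots.prod = (m : ℚ) * (1 / d) := by
          rw [hprodv]
          have hrepl : P.roots.map v = Multiset.replicate m ((1 : ℚ) / d) := by
            apply Multiset.eq_replicate.mpr
            refine ⟨by rw [Multiset.card_map, hroots_card], ?_⟩
            intro b hb
            obtain ⟨r, hr, rfl⟩ := Multiset.mem_map.mp hb
            exact (hrootv r hr).2
          rw [hrepl, Multiset.sum_replicate, nsmul_eq_mul]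
        have hc0 : (minpoly K πL).coeff 0 ≠ 0 := minpoly.coeff_zero_ne_zero hintπ hπ0
        obtain ⟨n, hn⟩ := hv_int _ hc0
        have hm1 : v ((-1 : Kbar) ^ P.natDegree) = 0 := by
          rw [aux_v_pow hv_mul (by norm_num : (-1 : Kbar) ≠ 0), hneg1, mul_zero]
        have hcoeffv : v (algebraMap K Kbar ((minpoly K πL).coeff 0)) = (m : ℚ) * (1 / d) := by
          have hcm : algebraMap K Kbar ((minpoly K πL).coeff 0) = P.coeff 0 := by
            rw [hP, Polynomial.coeff_map]
          rw [hcm, hsplits.coeff_zero_eq_prod_roots_of_monic hPmon,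
            hv_mul _ _ (by norm_num : ((-1 : Kbar) ^ P.natDegree) ≠ 0) hprod0, hm1, hvroots,
            zero_add]
        have hn_eq : (n : ℚ) = (m : ℚ) * (1 / d) := by rw [← hn, hcoeffv]
        have hmq : (0 : ℚ) < m := by exact_mod_cast hm_pos
        have hdq' : (0 : ℚ) < d := by exact_mod_cast hd0
        have hn_pos : (0 : ℤ) < n := by
          have : (0 : ℚ) < (n : ℚ) := by rw [hn_eq]; positivity
          exact_mod_cast this
        have hn1 : (1 : ℚ) ≤ (n : ℚ) := by exact_mod_cast hn_pos
        have hdm : (d : ℚ) ≤ (m : ℚ) := by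
          rw [hn_eq] at hn1
          have h' : (1 : ℚ) ≤ (m : ℚ) / d := by rw [div_eq_mul_one_div]; exact hn1
          exact (one_le_div hdq').mp h'
        have : d ≤ m := by exact_mod_cast hdm
        omega
      -- power basis generated by πL
      have hfr : Module.finrank K (Algebra.adjoin K ({πL} : Set L)) = m := by
        rw [PowerBasis.finrank (Algebra.adjoin.powerBasis' hintπ),
          Algebra.adjoin.powerBasis'_dim]
      have htopπ : Algebra.adjoin K ({πL} : Set L) = ⊤ := by
        have h1 : Module.finrank K
            (Subalgebra.toSubmodule (Algebra.adjoin K ({πL} : Set L))) = Module.finrank K L := by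
          show Module.finrank K (Algebra.adjoin K ({πL} : Set L)) = Module.finrank K L
          rw [hfr, hmd, hd]
        have h2 := Submodule.eq_top_of_finrank_eq h1
        rwa [Algebra.toSubmodule_eq_top] at h2
      set pbπ : PowerBasis K L := (Algebra.adjoin.powerBasis' hintπ).map
        ((Subalgebra.equivOfEq _ _ htopπ).trans Subalgebra.topEquiv) with hpbπ
      have hpbgen : pbπ.gen = πL := by
        simp [hpbπ, PowerBasis.map_gen, Algebra.adjoin.powerBasis'_gen]
      have hpbdim : pbπ.dim = d := by
        show (Algebra.adjoin.powerBasis' hintπ).dim = d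
        rw [Algebra.adjoin.powerBasis'_dim, ← hm, hmd]
      set c : Fin pbπ.dim → K := fun i => pbπ.basis.repr αL i with hc
      have hrep : ∀ σ : L →ₐ[K] Kbar, σ αL = ∑ i : Fin pbπ.dim,
          algebraMap K Kbar (c i) * (σ πL) ^ (i : ℕ) := by
        intro σ
        conv_lhs => rw [← pbπ.basis.sum_repr αL]
        rw [map_sum]
        refine Finset.sum_congr rfl fun i _ => ?_
        rw [PowerBasis.basis_eq_pow, hpbgen, map_smul, map_pow, Algebra.smul_def]
      -- bound on the coefficients
      have halg0 : ∀ x : K, x ≠ 0 → algebraMap K Kbar x ≠ 0 :=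
        fun x hx => (map_ne_zero_iff _ (algebraMap K Kbar).injective).2 hx
      have hcoeffb : ∀ i : Fin pbπ.dim, c i ≠ 0 →
          (a : ℚ) / d ≤ v (algebraMap K Kbar (c i)) + ((i : ℕ) : ℚ) * (1 / d) := by
        set f : Fin pbπ.dim → Kbar := fun i => algebraMap K Kbar (c i) * (ιL πL) ^ (i : ℕ)
          with hf
        have hαfull : ∑ i : Fin pbπ.dim, f i = α := by rw [← hαL, hrep ιL]
        set T := Finset.univ.filter (fun i : Fin pbπ.dim => c i ≠ 0) with hT
        have hfilter : ∑ i ∈ T, f i = α := by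
          rw [hT, Finset.sum_filter_of_ne, hαfull]
          intro i _ hne hci
          exact hne (by simp [hf, hci])
        have hTne : T.Nonempty := by
          by_contra h
          rw [Finset.not_nonempty_iff_eq_empty] at h
          rw [h, Finset.sum_empty] at hfilter
          exact hα0 hfilter.symm
        have hnz : ∀ i ∈ T, f i ≠ 0 := fun i hi =>
          mul_ne_zero (halg0 _ (Finset.mem_filter.mp hi).2) (pow_ne_zero _ hβ0)
        have hdist : ∀ i ∈ T, ∀ j ∈ T, i ≠ j → v (f i) ≠ v (f j) := by
          intro i hi j hj hij heq
          have hci := (Finset.mem_filter.mp hi).2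
          have hcj := (Finset.mem_filter.mp hj).2
          obtain ⟨ni, hni⟩ := hv_int _ hci
          obtain ⟨nj, hnj⟩ := hv_int _ hcj
          rw [hf] at heq
          simp only [] at heq
          rw [hv_mul _ _ (halg0 _ hci) (pow_ne_zero _ hβ0),
            hv_mul _ _ (halg0 _ hcj) (pow_ne_zero _ hβ0),
            aux_v_pow hv_mul hβ0, aux_v_pow hv_mul hβ0, hvβ, hni, hnj] at heq
          have hdq' : (0 : ℚ) < d := by exact_mod_cast hd0
          have h1 : ((i : ℕ) : ℚ) - ((j : ℕ) : ℚ) = ((nj : ℚ) - (ni : ℚ)) * d := by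
            field_simp at heq ⊢
            linarith
          have h2 : ((i : ℕ) : ℤ) - ((j : ℕ) : ℤ) = (nj - ni) * (d : ℤ) := by
            exact_mod_cast h1
          have hi' : (i : ℕ) < d := hpbdim ▸ i.isLt
          have hj' : (j : ℕ) < d := hpbdim ▸ j.isLt
          have h3 : ((i : ℕ) : ℤ) - ((j : ℕ) : ℤ) = 0 := by
            have hdvd : (d : ℤ) ∣ ((i : ℕ) : ℤ) - ((j : ℕ) : ℤ) :=
              ⟨nj - ni, by rw [h2]; ring⟩
            refine Int.eq_zero_of_abs_lt_dvd hdvd ?_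
            rw [abs_lt]
            omega
          exact hij (Fin.ext (by omega))
        obtain ⟨-, -, hle⟩ := aux_v_sum_distinct hv_mul hv_add T f hTne hnz hdist
        intro i hci
        have h1 := hle i (Finset.mem_filter.mpr ⟨Finset.mem_univ i, hci⟩)
        rw [hfilter, hvα] at h1
        rw [hf] at h1
        simp only [] at h1
        rwa [hv_mul _ _ (halg0 _ hci) (pow_ne_zero _ hβ0),
          aux_v_pow hv_mul hβ0, hvβ] at h1
      -- the pair estimate
      intro σ τ hστ
      have hπLne : σ πL ≠ τ πL := by
        intro h
        apply hστ
        have hle : Algebra.adjoin K ({πL} : Set L) ≤ AlgHom.equalizer σ τ :=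
          Algebra.adjoin_le (Set.singleton_subset_iff.2 h)
        rw [htopπ] at hle
        exact AlgHom.ext fun x => hle Algebra.mem_top
      have hστα := hαLne σ τ hστ
      have hu0 : σ πL ≠ 0 := (map_ne_zero_iff σ σ.injective).2 hπ0
      have hw0 : τ πL ≠ 0 := (map_ne_zero_iff τ τ.injective).2 hπ0
      have hvu : v (σ πL) = 1 / d := by rw [vhom σ πL, hvβ]
      have hvw : v (τ πL) = 1 / d := by rw [vhom τ πL, hvβ]
      have hδ0 : σ πL - τ πL ≠ 0 := sub_ne_zero.2 hπLne
      set G : Fin pbπ.dim → Kbar := fun i =>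
        ∑ j ∈ Finset.range (i : ℕ), (σ πL) ^ j * (τ πL) ^ ((i : ℕ) - 1 - j) with hG
      set S : Kbar := ∑ i : Fin pbπ.dim, algebraMap K Kbar (c i) * G i with hS
      have hfactor : σ αL - τ αL = S * (σ πL - τ πL) := by
        rw [hrep σ, hrep τ, ← Finset.sum_sub_distrib, hS, Finset.sum_mul]
        refine Finset.sum_congr rfl fun i _ => ?_
        simp only [hG]
        calc algebraMap K Kbar (c i) * σ πL ^ (i : ℕ)
              - algebraMap K Kbar (c i) * τ πL ^ (i : ℕ)
            = algebraMap K Kbar (c i) *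
              ((∑ j ∈ Finset.range (i : ℕ), (σ πL) ^ j * (τ πL) ^ ((i : ℕ) - 1 - j))
                * (σ πL - τ πL)) := by
              rw [geom_sum₂_mul]; ring
          _ = algebraMap K Kbar (c i) *
              (∑ j ∈ Finset.range (i : ℕ), (σ πL) ^ j * (τ πL) ^ ((i : ℕ) - 1 - j))
                * (σ πL - τ πL) := by ring
      have hS0 : S ≠ 0 := by
        intro h
        apply sub_ne_zero.2 hστα
        rw [hfactor, h, zero_mul]
      have hvS : ((a : ℚ) - 1) / d ≤ v S := by
        rw [hS]
        apply aux_v_sum_ge hv_add _ _ _ _ (by rw [← hS]; exact hS0)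
        intro i _
        by_cases hci : c i = 0
        · left; simp [hci]
        by_cases hGi : G i = 0
        · left; simp [hGi]
        right
        have hipos : 0 < (i : ℕ) := by
          rcases Nat.eq_zero_or_pos (i : ℕ) with h | h
          · exfalso; apply hGi; simp only [hG]; rw [h]; simp
          · exact h
        have hvGi : (((i : ℕ) : ℚ) - 1) * (1 / d) ≤ v (G i) := by
          simp only [hG] at hGi ⊢
          apply aux_v_sum_ge hv_add _ _ _ _ hGi
          intro j hj
          right
          have hj' : j < (i : ℕ) := Finset.mem_range.mp hj
          rw [hv_mul _ _ (pow_ne_zero _ hu0) (pow_ne_zero _ hw0),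
            aux_v_pow hv_mul hu0, aux_v_pow hv_mul hw0, hvu, hvw]
          have h1 : j ≤ (i : ℕ) - 1 := by omega
          have h2 : 1 ≤ (i : ℕ) := hipos
          have hcast : (((i : ℕ) - 1 - j : ℕ) : ℚ) = ((i : ℕ) : ℚ) - 1 - (j : ℚ) := by
            push_cast [Nat.cast_sub h1, Nat.cast_sub h2]
            ring
          rw [hcast]
          ring_nf
          linarith
        have hCi := hcoeffb i hci
        rw [hv_mul _ _ (halg0 _ hci) hGi]
        have e2 : (((i : ℕ) : ℚ) - 1) * (1 / d) = ((i : ℕ) : ℚ) * (1 / d) - 1 / d := by ring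
        have e3 : ((a : ℚ)) / d = (a : ℚ) * (1 / d) := by ring
        have e4 : ((a : ℚ) - 1) / d = (a : ℚ) * (1 / d) - 1 / d := by ring
        linarith
      have hveq : v (σ αL - τ αL) = v S + v (σ πL - τ πL) := by
        rw [hfactor, hv_mul S _ hS0 hδ0]
      linarith
  -- assembling
  set s : Finset ((L →ₐ[K] Kbar) × (L →ₐ[K] Kbar)) :=
    (univ : Finset ((L →ₐ[K] Kbar) × (L →ₐ[K] Kbar))).filter (fun p => p.1 ≠ p.2) with hs
  have hseq : s = (univ : Finset (L →ₐ[K] Kbar)).offDiag := by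
    ext p; simp [hs]
  have hcards : s.card = d * d - d := by
    rw [hseq, Finset.offDiag_card, Finset.card_univ, hcardE]
  have hsum := Finset.card_nsmul_le_sum s
    (fun p => v (p.1 αL - p.2 αL) - v (p.1 πL - p.2 πL)) (((a : ℚ) - 1) / d)
    (fun p hp => pairbound p.1 p.2 (by simpa [hs] using (Finset.mem_filter.mp hp).2))
  rw [← Finset.sum_sub_distrib]
  calc ((d : ℚ) - 1) * ((a : ℚ) - 1) = (d * d - d : ℚ) * (((a : ℚ) - 1) / d) := by
        field_simp
    _ = ((d * d - d : ℕ) : ℚ) * (((a : ℚ) - 1) / d) := by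
        push_cast [Nat.cast_sub (Nat.le_mul_of_pos_left d hd0)]; ring
    _ = s.card • (((a : ℚ) - 1) / d) := by rw [hcards, nsmul_eq_mul]
    _ ≤ _ := hsum
end

section
/- Let α ∈ K^sep with ν_K(α) = b/c written in lowest terms (b, c coprime positive integers), and suppose [K(α):K] = c. If c = 2, then db_K(α) ≥ b − 1. If c ≥ 3 and b ≥ 3, then db_K(α) ≥ 2(⌊b/c⌋ + c − 1), and equality can hold in this case only if b = 3 or b/c = 4/3. -/
open Polynomial Finset
open scoped Classical

namespace DB13

set_option linter.unusedSectionVars false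


variable {Kbar : Type*} [Field Kbar] (v : Kbar → ℚ)

section basic
variable (hv_mul : ∀ x y : Kbar, x ≠ 0 → y ≠ 0 → v (x * y) = v x + v y)
include hv_mul

lemma v_one : v 1 = 0 := by
  have := hv_mul 1 1 one_ne_zero one_ne_zero
  simp at this; linarith

lemma v_neg (x : Kbar) : v (-x) = v x := by
  rcases eq_or_ne x 0 with rfl | hx
  · simp
  · have h1 : v ((-1) * (-1)) = v (-1) + v (-1) := hv_mul _ _ (by norm_num) (by norm_num)
    simp only [neg_mul, one_mul, neg_neg] at h1
    rw [v_one v hv_mul] at h1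
    have hm : v (-x) = v (-1) + v x := by
      rw [← neg_one_mul]; exact hv_mul _ _ (by norm_num) hx
    rw [hm]; linarith

lemma v_pow (x : Kbar) (hx : x ≠ 0) (n : ℕ) : v (x ^ n) = n * v x := by
  induction n with
  | zero => simpa using v_one v hv_mul
  | succ n ih =>
    rw [pow_succ, hv_mul _ _ (pow_ne_zero _ hx) hx, ih]
    push_cast; ring

lemma v_div (x y : Kbar) (hx : x ≠ 0) (hy : y ≠ 0) : v (x / y) = v x - v y := by
  have h : v (x / y * y) = v (x / y) + v y := hv_mul _ _ (div_ne_zero hx hy) hy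
  rw [div_mul_cancel₀ _ hy] at h
  linarith

end basic

/-- `x` is zero or has valuation at least `r`. -/
def VGE (r : ℚ) (x : Kbar) : Prop := x = 0 ∨ r ≤ v x

section vge
variable (hv_mul : ∀ x y : Kbar, x ≠ 0 → y ≠ 0 → v (x * y) = v x + v y)
    (hv_add : ∀ x y : Kbar, x ≠ 0 → y ≠ 0 → x + y ≠ 0 → min (v x) (v y) ≤ v (x + y))

lemma VGE.mono {r s : ℚ} {x : Kbar} (h : VGE v s x) (hrs : r ≤ s) : VGE v r x :=
  h.imp id fun h' => le_trans hrs h'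

include hv_add in
lemma VGE.add {r : ℚ} {x y : Kbar} (hx : VGE v r x) (hy : VGE v r y) : VGE v r (x + y) := by
  rcases hx with rfl | hx
  · simpa using hy
  · rcases hy with rfl | hy
    · rw [add_zero]; exact Or.inr hx
    · rcases eq_or_ne x 0 with rfl | hx0
      · rw [zero_add]; exact Or.inr hy
      · rcases eq_or_ne y 0 with rfl | hy0
        · rw [add_zero]; exact Or.inr hx
        · rcases eq_or_ne (x + y) 0 with h0 | h0
          · exact Or.inl h0
          · exact Or.inr (le_trans (le_min hx hy) (hv_add x y hx0 hy0 h0))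

include hv_mul in
lemma VGE.mul {r s : ℚ} {x y : Kbar} (hx : VGE v r x) (hy : VGE v s y) :
    VGE v (r + s) (x * y) := by
  rcases hx with rfl | hx
  · exact Or.inl (by simp)
  rcases hy with rfl | hy
  · exact Or.inl (by simp)
  rcases eq_or_ne x 0 with rfl | hx0
  · exact Or.inl (by simp)
  rcases eq_or_ne y 0 with rfl | hy0
  · exact Or.inl (by simp)
  exact Or.inr (by rw [hv_mul x y hx0 hy0]; exact add_le_add hx hy)

include hv_add in
lemma VGE.sum {ι : Type*} {s : Finset ι} {r : ℚ} {f : ι → Kbar}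
    (h : ∀ i ∈ s, VGE v r (f i)) : VGE v r (∑ i ∈ s, f i) := by
  classical
  induction s using Finset.induction_on with
  | empty => exact Or.inl (by simp)
  | insert _ _ hni ih =>
    rw [Finset.sum_insert hni]
    exact VGE.add v hv_add (h _ (Finset.mem_insert_self _ _))
      (ih fun i hi => h i (Finset.mem_insert_of_mem hi))

include hv_mul in
lemma VGE.pow {x : Kbar} (hx : VGE v 0 x) (n : ℕ) : VGE v 0 (x ^ n) := by
  induction n with
  | zero => exact Or.inr (by simpa using (v_one v hv_mul).ge)
  | succ n ih => rw [pow_succ]; simpa using VGE.mul v hv_mul ih hx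

lemma v_prod (hv_mul : ∀ x y : Kbar, x ≠ 0 → y ≠ 0 → v (x * y) = v x + v y)
    {ι : Type*} {s : Finset ι} {f : ι → Kbar} (h : ∀ i ∈ s, f i ≠ 0) :
    v (∏ i ∈ s, f i) = ∑ i ∈ s, v (f i) := by
  classical
  induction s using Finset.induction_on with
  | empty => simpa using v_one v hv_mul
  | insert _ _ hni ih =>
    rename_i a s'
    rw [Finset.prod_insert hni, Finset.sum_insert hni,
      hv_mul _ _ (h _ (Finset.mem_insert_self _ _))
        (Finset.prod_ne_zero_iff.2 fun i hi => h i (Finset.mem_insert_of_mem hi)),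
      ih fun i hi => h i (Finset.mem_insert_of_mem hi)]

end vge


variable {K Kbar : Type*} [Field K] [Field Kbar] [Algebra K Kbar] [IsAlgClosure K Kbar]
variable (v : Kbar → ℚ)

/-- conjugation invariance of `v` on images of two embeddings -/
lemma v_conj (hv_gal : ∀ (σ : Kbar ≃ₐ[K] Kbar) (x : Kbar), v (σ x) = v x)
    {F : Type*} [Field F] [Algebra K F] (σ τ : F →ₐ[K] Kbar) (x : F) :
    v (σ x) = v (τ x) := by
  have hconj : IsConjRoot K (σ x) (τ x) := by
    rw [IsConjRoot, minpoly.algHom_eq σ σ.injective x, minpoly.algHom_eq τ τ.injective x]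
  obtain ⟨g, hg⟩ := hconj.symm.exists_algEquiv
  rw [← hg, hv_gal]

lemma algHom_ext_gen {L : Type*} [Field L] [Algebra K L] {x : L}
    (hgen : Algebra.adjoin K {x} = ⊤) {σ τ : L →ₐ[K] Kbar} (h : σ x = τ x) : σ = τ := by
  apply AlgHom.ext
  intro y
  have hy : y ∈ Algebra.adjoin K {x} := hgen ▸ Algebra.mem_top
  induction hy using Algebra.adjoin_induction with
  | mem z hz => rcases hz with rfl; exact h
  | algebraMap r => simp
  | add a b _ _ ha hb => simp [ha, hb]
  | mul a b _ _ ha hb => simp [ha, hb]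


set_option linter.unusedSectionVars false

variable {K Kbar : Type*} [Field K] [Field Kbar] [Algebra K Kbar] [IsAlgClosure K Kbar]
variable (v : Kbar → ℚ)

lemma sep_of_gen {L : Type*} [Field L] [Algebra K L] [FiniteDimensional K L]
    (ιL : L →ₐ[K] Kbar) (αL : L) (hsep : (minpoly K (ιL αL)).Separable)
    (hgen : Algebra.adjoin K {αL} = ⊤) : Algebra.IsSeparable K L := by
  have h1 : minpoly K (ιL αL) = minpoly K αL := minpoly.algHom_eq ιL ιL.injective αL
  have hsepαL : IsSeparable K αL := by
    show (minpoly K αL).Separable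
    rw [← h1]; exact hsep
  have htop : IntermediateField.adjoin K {αL} = ⊤ := by
    apply IntermediateField.toSubalgebra_injective
    rw [IntermediateField.adjoin_toSubalgebra_of_isAlgebraic
      (fun x _ => (Algebra.IsIntegral.isIntegral (R := K) x).isAlgebraic), hgen]
    rfl
  haveI := (IntermediateField.isSeparable_adjoin_simple_iff_isSeparable (F := K)
    (E := L)).2 hsepαL
  rw [htop] at this
  exact AlgEquiv.Algebra.isSeparable (IntermediateField.topEquiv (F := K) (E := L))

/-- value group: `c * v (ιL x) ∈ ℤ` for nonzero `x` in a degree-`c` subfield. -/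
lemma val_int (hv_mul : ∀ x y : Kbar, x ≠ 0 → y ≠ 0 → v (x * y) = v x + v y)
    (hv_gal : ∀ (σ : Kbar ≃ₐ[K] Kbar) (x : Kbar), v (σ x) = v x)
    (hv_int : ∀ x : K, x ≠ 0 → ∃ n : ℤ, v (algebraMap K Kbar x) = (n : ℚ))
    {L : Type*} [Field L] [Algebra K L] [FiniteDimensional K L] [Algebra.IsSeparable K L]
    (ιL : L →ₐ[K] Kbar) (x : L) (hx : x ≠ 0) :
    ∃ n : ℤ, (Module.finrank K L : ℚ) * v (ιL x) = n := by
  haveI : IsAlgClosed Kbar := IsAlgClosure.isAlgClosed K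
  have hnorm : algebraMap K Kbar (Algebra.norm K x) = ∏ σ : L →ₐ[K] Kbar, σ x :=
    Algebra.norm_eq_prod_embeddings K Kbar x
  have hn0 : Algebra.norm K x ≠ 0 := by
    rw [Algebra.norm_ne_zero_iff]; exact hx
  obtain ⟨n, hn⟩ := hv_int _ hn0
  refine ⟨n, ?_⟩
  rw [← hn, hnorm, v_prod v hv_mul (fun σ _ => by simp [_root_.map_ne_zero, hx])]
  have hconst : ∀ σ : L →ₐ[K] Kbar, v (σ x) = v (ιL x) := fun σ => v_conj v hv_gal σ ιL x
  rw [Finset.sum_congr rfl (fun σ _ => hconst σ), Finset.sum_const, Finset.card_univ,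
    AlgHom.card K L Kbar, nsmul_eq_mul]



set_option maxHeartbeats 1000000 in
lemma pi_gen (hv_mul : ∀ x y : Kbar, x ≠ 0 → y ≠ 0 → v (x * y) = v x + v y)
    (hv_gal : ∀ (σ : Kbar ≃ₐ[K] Kbar) (x : Kbar), v (σ x) = v x)
    (hv_int : ∀ x : K, x ≠ 0 → ∃ n : ℤ, v (algebraMap K Kbar x) = (n : ℚ))
    {L : Type*} [Field L] [Algebra K L] [FiniteDimensional K L] [Algebra.IsSeparable K L]
    (ιL : L →ₐ[K] Kbar) {c : ℕ} (hc : 0 < c) (hdeg : Module.finrank K L = c)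
    {πL : L} (hπ0 : πL ≠ 0) (hπL : (c : ℚ) * v (ιL πL) = 1) :
    Algebra.adjoin K {πL} = ⊤ := by
  set F := IntermediateField.adjoin K {πL} with hF
  haveI : Algebra.IsSeparable K F := Algebra.isSeparable_tower_bot_of_isSeparable K F L
  set g : F := IntermediateField.AdjoinSimple.gen K πL with hgdef
  have hg : (ιL.comp F.val) g = ιL πL := by
    simp [hgdef, IntermediateField.AdjoinSimple.algebraMap_gen]
  have hg0 : g ≠ 0 := by
    intro h
    apply hπ0
    have : (g : L) = 0 := by rw [h]; rfl
    rwa [IntermediateField.AdjoinSimple.coe_gen] at this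
  obtain ⟨n, hn⟩ := val_int v hv_mul hv_gal hv_int (ιL.comp F.val) g hg0
  rw [hg] at hn
  set d := Module.finrank K F with hd
  have hd0 : 0 < d := Module.finrank_pos
  -- from hπL : c * v(ιL πL) = 1, get v(ιL πL) = 1/c
  have hvπ : v (ιL πL) = 1 / (c : ℚ) := by
    field_simp at hπL ⊢
    linarith
  have hdc : (d : ℚ) = (n : ℚ) * c := by
    rw [hvπ] at hn
    have hcne : (c : ℚ) ≠ 0 := by positivity
    field_simp at hn
    linarith
  have hcq : (0 : ℚ) < (c : ℚ) := by positivity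
  have hn1 : (1 : ℚ) ≤ (n : ℚ) := by
    by_contra h
    push_neg at h
    have h' : n ≤ 0 := by exact_mod_cast Int.lt_add_one_iff.mp (by exact_mod_cast h)
    have hq : (n : ℚ) ≤ 0 := by exact_mod_cast h'
    have hd1 : (1 : ℚ) ≤ (d : ℚ) := by exact_mod_cast hd0
    nlinarith
  have hcd : c ≤ d := by
    have h2 : (c : ℚ) ≤ (d : ℚ) := by nlinarith
    exact_mod_cast h2
  have hdle : d ≤ c := by
    have := Module.finrank_mul_finrank K F L
    rw [hdeg, ← hd] at this
    nlinarith [Module.finrank_pos (R := F) (M := L)]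
  have hFtop : F = ⊤ := by
    apply IntermediateField.eq_of_le_of_finrank_le le_top
    rw [IntermediateField.finrank_top', hdeg]
    omega
  have halg : (IntermediateField.adjoin K ({πL} : Set L)).toSubalgebra
      = Algebra.adjoin K ({πL} : Set L) :=
    IntermediateField.adjoin_toSubalgebra_of_isAlgebraic
      (fun x _ => (Algebra.IsIntegral.isIntegral (R := K) x).isAlgebraic)
  rw [← halg, ← hF, hFtop]
  rfl



section approx
variable (hv_mul : ∀ x y : Kbar, x ≠ 0 → y ≠ 0 → v (x * y) = v x + v y)
    (hv_add : ∀ x y : Kbar, x ≠ 0 → y ≠ 0 → x + y ≠ 0 → min (v x) (v y) ≤ v (x + y))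
    (hv_gal : ∀ (σ : Kbar ≃ₐ[K] Kbar) (x : Kbar), v (σ x) = v x)
    (hv_int : ∀ x : K, x ≠ 0 → ∃ n : ℤ, v (algebraMap K Kbar x) = (n : ℚ))
    (hv_res : ∀ x : Kbar, x ≠ 0 → 0 ≤ v x →
      ∃ η : K, x = algebraMap K Kbar η ∨ 0 < v (x - algebraMap K Kbar η))

/-- good coefficient predicate -/
def KG (a : K) : Prop := a = 0 ∨ 0 ≤ v (algebraMap K Kbar a)

include hv_add in
lemma KG.add {a b : K} (ha : KG v a) (hb : KG v b) : KG v (a + b) := by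
  rcases ha with rfl | ha
  · simpa using hb
  rcases hb with rfl | hb
  · rw [add_zero]; exact Or.inr ha
  rcases eq_or_ne (a + b) 0 with h0 | h0
  · exact Or.inl h0
  rcases eq_or_ne a 0 with rfl | ha0
  · rw [zero_add]; exact Or.inr hb
  rcases eq_or_ne b 0 with rfl | hb0
  · rw [add_zero]; exact Or.inr ha
  right
  rw [map_add]
  refine le_trans (le_min ha hb) (hv_add _ _ ?_ ?_ ?_) <;>
    simp [_root_.map_ne_zero, ha0, hb0, ← map_add, h0]

include hv_mul hv_add hv_gal hv_int hv_res in
lemma approx {L : Type*} [Field L] [Algebra K L] [FiniteDimensional K L]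
    [Algebra.IsSeparable K L]
    (ιL : L →ₐ[K] Kbar) {c : ℕ} (hc : 0 < c) (hdeg : Module.finrank K L = c)
    {πL : L} (hπ0 : πL ≠ 0) (hπv : v (ιL πL) = 1 / (c : ℚ)) (t : ℕ) (x : L)
    (hx : x = 0 ∨ 0 ≤ v (ιL x)) :
    ∃ p : Polynomial K, (∀ i, KG v (p.coeff i)) ∧
      (x = aeval πL p ∨ (t : ℚ) / c ≤ v (ιL (x - aeval πL p))) := by
  have hcq : (0 : ℚ) < (c : ℚ) := by positivity
  have hπb0 : ιL πL ≠ 0 := by simp [_root_.map_ne_zero, hπ0]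
  induction t with
  | zero =>
    refine ⟨0, fun i => Or.inl (by simp), ?_⟩
    rcases hx with rfl | hx
    · exact Or.inl (by simp)
    · right; simpa using by linarith [hx]
  | succ t ih =>
    obtain ⟨p, hpc, hp⟩ := ih
    rcases eq_or_ne x (aeval πL p) with heq | hne
    · exact ⟨p, hpc, Or.inl heq⟩
    have he : (t : ℚ) / c ≤ v (ιL (x - aeval πL p)) := by
      rcases hp with heq' | h
      · exact absurd heq' hne
      · exact h
    set e : L := x - aeval πL p with hedef
    have he0 : e ≠ 0 := sub_ne_zero.mpr hne
    have hιe0 : ιL e ≠ 0 := by simp [_root_.map_ne_zero, he0]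
    obtain ⟨n, hn⟩ := val_int v hv_mul hv_gal hv_int ιL e he0
    rw [hdeg] at hn
    have hcne : (c : ℚ) ≠ 0 := ne_of_gt hcq
    have hven : v (ιL e) = (n : ℚ) / c := by
      rw [eq_div_iff hcne, mul_comm]
      exact hn
    have hnt : (t : ℚ) ≤ (n : ℚ) := by
      rw [hven] at he
      have := mul_le_mul_of_nonneg_right he hcq.le
      rw [div_mul_cancel₀ _ hcne, div_mul_cancel₀ _ hcne] at this
      exact this
    have hn0 : 0 ≤ n := by exact_mod_cast le_trans (by positivity : (0:ℚ) ≤ (t:ℚ)) hnt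
    set m : ℕ := n.toNat with hmdef
    have hmq : (m : ℚ) = (n : ℚ) := by
      have := Int.toNat_of_nonneg hn0
      exact_mod_cast congrArg (fun z : ℤ => (z : ℚ)) this
    have hve : v (ιL e) = (m : ℚ) / c := by rw [hven, hmq]
    set ξ : Kbar := ιL e / (ιL πL) ^ m with hξdef
    have hπpow : (ιL πL) ^ m ≠ 0 := pow_ne_zero _ hπb0
    have hξ0 : ξ ≠ 0 := div_ne_zero hιe0 hπpow
    have hξv : v ξ = 0 := by
      rw [hξdef, v_div v hv_mul _ _ hιe0 hπpow, v_pow v hv_mul _ hπb0, hπv, hve]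
      field_simp
      ring
    obtain ⟨η, hη⟩ := hv_res ξ hξ0 hξv.ge
    set p' := p + C η * X ^ m with hp'def
    have haev : aeval πL p' = aeval πL p + algebraMap K L η * πL ^ m := by
      simp [hp'def]
    have hKGη : KG v η := by
      rcases eq_or_ne η 0 with rfl | hη0
      · exact Or.inl rfl
      right
      rcases eq_or_ne (algebraMap K Kbar η) ξ with hex | hex
      · rw [hex, hξv]
      rcases hη with hη1 | hη2
      · exact absurd hη1.symm hex
      have h3 : algebraMap K Kbar η = ξ + (algebraMap K Kbar η - ξ) := by ring
      have h4 : algebraMap K Kbar η - ξ ≠ 0 := sub_ne_zero.mpr hex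
      have h5 : 0 ≤ v (algebraMap K Kbar η - ξ) := by
        have : algebraMap K Kbar η - ξ = -(ξ - algebraMap K Kbar η) := by ring
        rw [this, v_neg v hv_mul]
        exact hη2.le
      calc (0:ℚ) ≤ min (v ξ) (v (algebraMap K Kbar η - ξ)) := le_min hξv.ge h5
        _ ≤ v (ξ + (algebraMap K Kbar η - ξ)) :=
            hv_add _ _ hξ0 h4 (by rw [← h3]; simp [_root_.map_ne_zero, hη0])
        _ = v (algebraMap K Kbar η) := by rw [← h3]
    have hpc' : ∀ i, KG v (p'.coeff i) := by
      intro i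
      rw [hp'def, coeff_add]
      refine KG.add v hv_add (hpc i) ?_
      rw [coeff_C_mul, coeff_X_pow]
      rcases eq_or_ne i m with rfl | him
      · simpa using hKGη
      · simp only [him, if_false, mul_zero]
        exact Or.inl rfl
    have hkey : ιL (x - aeval πL p') = (ξ - algebraMap K Kbar η) * (ιL πL) ^ m := by
      have h1 : x - aeval πL p' = e - algebraMap K L η * πL ^ m := by
        rw [hedef, haev]; ring
      rw [h1, map_sub, map_mul, map_pow, AlgHom.commutes]
      have hξe : ξ * (ιL πL) ^ m = ιL e := div_mul_cancel₀ _ hπpow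
      rw [← hξe]; ring
    rcases eq_or_ne (ξ - algebraMap K Kbar η) 0 with hz | hz
    · refine ⟨p', hpc', Or.inl ?_⟩
      have h0 : ιL (x - aeval πL p') = 0 := by rw [hkey, hz, zero_mul]
      have h1 := ιL.injective (by rw [h0, map_zero] : ιL (x - aeval πL p') = ιL 0)
      exact sub_eq_zero.mp h1
    · have hvz : 0 < v (ξ - algebraMap K Kbar η) := by
        rcases hη with hη1 | hη2
        · exact absurd (by rw [← hη1, sub_self]) hz
        · exact hη2
      have he'0 : x - aeval πL p' ≠ 0 := by
        intro h
        apply hz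
        have : (ξ - algebraMap K Kbar η) * (ιL πL) ^ m = 0 := by rw [← hkey, h, map_zero]
        exact (mul_eq_zero.mp this).resolve_right hπpow
      obtain ⟨n', hn'⟩ := val_int v hv_mul hv_gal hv_int ιL _ he'0
      rw [hdeg] at hn'
      have hv' : v (ιL (x - aeval πL p')) = v (ξ - algebraMap K Kbar η) + (m : ℚ) / c := by
        rw [hkey, hv_mul _ _ hz hπpow, v_pow v hv_mul _ hπb0, hπv]
        ring
      have hven' : v (ιL (x - aeval πL p')) = (n' : ℚ) / c := by
        rw [eq_div_iff hcne, mul_comm]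
        exact hn'
      have h6 : (n : ℚ) < (n' : ℚ) := by
        have h5 : (n : ℚ) / c < (n' : ℚ) / c := by
          rw [← hven', hv', ← hmq]
          have : (m : ℚ) / c < v (ξ - algebraMap K Kbar η) + (m : ℚ) / c := by linarith
          linarith
        have := mul_lt_mul_of_pos_right h5 hcq
        rw [div_mul_cancel₀ _ hcne, div_mul_cancel₀ _ hcne] at this
        exact this
      have h7 : (t : ℚ) + 1 ≤ (n' : ℚ) := by
        have hnn' : n < n' := by exact_mod_cast h6
        have htn : (t : ℤ) ≤ n := by exact_mod_cast hnt
        have : (t : ℤ) + 1 ≤ n' := by omega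
        exact_mod_cast this
      refine ⟨p', hpc', Or.inr ?_⟩
      rw [hven']
      push_cast
      gcongr

end approx


section main
variable (hv_mul : ∀ x y : Kbar, x ≠ 0 → y ≠ 0 → v (x * y) = v x + v y)
    (hv_add : ∀ x y : Kbar, x ≠ 0 → y ≠ 0 → x + y ≠ 0 → min (v x) (v y) ≤ v (x + y))
    (hv_gal : ∀ (σ : Kbar ≃ₐ[K] Kbar) (x : Kbar), v (σ x) = v x)
    (hv_int : ∀ x : K, x ≠ 0 → ∃ n : ℤ, v (algebraMap K Kbar x) = (n : ℚ))
    (hv_res : ∀ x : Kbar, x ≠ 0 → 0 ≤ v x →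
      ∃ η : K, x = algebraMap K Kbar η ∨ 0 < v (x - algebraMap K Kbar η))

include hv_mul hv_add hv_gal hv_int hv_res in
lemma diff_vge {L : Type*} [Field L] [Algebra K L] [FiniteDimensional K L]
    [Algebra.IsSeparable K L]
    (ιL : L →ₐ[K] Kbar) {c : ℕ} (hc : 0 < c) (hdeg : Module.finrank K L = c)
    {πL : L} (hπ0 : πL ≠ 0) (hπv : v (ιL πL) = 1 / (c : ℚ))
    (σ τ : L →ₐ[K] Kbar) (x : L) (hx : x = 0 ∨ 0 ≤ v (ιL x)) :
    VGE v (v (σ πL - τ πL)) (σ x - τ x) := by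
  have hcq : (0 : ℚ) < (c : ℚ) := by positivity
  set r := v (σ πL - τ πL) with hrdef
  obtain ⟨t, ht⟩ := exists_nat_ge (r * c)
  have hrt : r ≤ (t : ℚ) / c := (le_div_iff₀ hcq).mpr ht
  obtain ⟨p, hpc, hp⟩ := approx v hv_mul hv_add hv_gal hv_int hv_res ιL hc hdeg hπ0 hπv t x hx
  have hpoly : VGE v r (σ (aeval πL p) - τ (aeval πL p)) := by
    rw [← aeval_algHom_apply σ πL p, ← aeval_algHom_apply τ πL p]
    rw [aeval_eq_sum_range (σ πL), aeval_eq_sum_range (τ πL), ← Finset.sum_sub_distrib]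
    apply VGE.sum v hv_add
    intro i _
    have h1 : p.coeff i • σ πL ^ i - p.coeff i • τ πL ^ i
        = algebraMap K Kbar (p.coeff i) * ((∑ j ∈ range i, σ πL ^ j * τ πL ^ (i - 1 - j))
            * (σ πL - τ πL)) := by
      rw [geom_sum₂_mul, Algebra.smul_def, Algebra.smul_def]
      ring
    rw [h1]
    have hcoef : VGE v 0 (algebraMap K Kbar (p.coeff i)) := by
      rcases hpc i with h | h
      · exact Or.inl (by simp [h])
      · exact Or.inr h
    have hσπ : VGE v 0 (σ πL) := Or.inr (by
      rw [v_conj v hv_gal σ ιL, hπv]; positivity)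
    have hτπ : VGE v 0 (τ πL) := Or.inr (by
      rw [v_conj v hv_gal τ ιL, hπv]; positivity)
    have hgeom : VGE v 0 (∑ j ∈ range i, σ πL ^ j * τ πL ^ (i - 1 - j)) := by
      apply VGE.sum v hv_add
      intro j _
      simpa using VGE.mul v hv_mul (VGE.pow v hv_mul hσπ j) (VGE.pow v hv_mul hτπ _)
    have hd : VGE v r (σ πL - τ πL) := Or.inr le_rfl
    have := VGE.mul v hv_mul hcoef (VGE.mul v hv_mul hgeom hd)
    simpa using this
  rcases eq_or_ne x (aeval πL p) with heq | hne
  · rw [heq]; exact hpoly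
  have he : (t : ℚ) / c ≤ v (ιL (x - aeval πL p)) := hp.resolve_left hne
  set e : L := x - aeval πL p with hedef
  have he0 : e ≠ 0 := sub_ne_zero.mpr hne
  have hσe : VGE v r (σ e) := by
    right
    rw [v_conj v hv_gal σ ιL]
    exact le_trans hrt he
  have hτe : VGE v r (-(τ e)) := by
    right
    rw [v_neg v hv_mul, v_conj v hv_gal τ ιL]
    exact le_trans hrt he
  have hsplit : σ x - τ x = (σ (aeval πL p) - τ (aeval πL p)) + (σ e + -(τ e)) := by
    have : x = aeval πL p + e := by rw [hedef]; ring
    rw [this, map_add, map_add]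
    ring
  rw [hsplit]
  exact VGE.add v hv_add hpoly (VGE.add v hv_add hσe hτe)

include hv_mul hv_add hv_gal hv_int hv_res in
lemma pair_bound {L : Type*} [Field L] [Algebra K L] [FiniteDimensional K L]
    [Algebra.IsSeparable K L]
    (ιL : L →ₐ[K] Kbar) {c : ℕ} (hc : 0 < c) (hdeg : Module.finrank K L = c)
    {α : Kbar} (hα0 : α ≠ 0) {b : ℕ} (hb : 0 < b) (hval : v α = (b : ℚ) / (c : ℚ))
    {αL : L} (hαL : ιL αL = α) (hgen : Algebra.adjoin K {αL} = ⊤)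
    {πL : L} (hπL : (c : ℚ) * v (ιL πL) = 1)
    (σ τ : L →ₐ[K] Kbar) (hστ : σ ≠ τ) :
    v (σ πL - τ πL) + ((b : ℚ) - 1) / c ≤ v (σ αL - τ αL) := by
  have hcq : (0 : ℚ) < (c : ℚ) := by positivity
  have hcne : (c : ℚ) ≠ 0 := ne_of_gt hcq
  have hαLne : σ αL ≠ τ αL := fun h => hστ (algHom_ext_gen hgen h)
  have hαLd0 : σ αL - τ αL ≠ 0 := sub_ne_zero.mpr hαLne
  have hα0' : αL ≠ 0 := by
    intro h; apply hα0; rw [← hαL, h, map_zero]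
  have hvσα : v (σ αL) = (b : ℚ) / c := by
    rw [v_conj v hv_gal σ ιL, hαL, hval]
  have hvτα : v (τ αL) = (b : ℚ) / c := by
    rw [v_conj v hv_gal τ ιL, hαL, hval]
  rcases eq_or_ne πL 0 with rfl | hπ0
  · have hπL' : (c : ℚ) * v (0 : Kbar) = 1 := by simpa using hπL
    have hv00 : v (0 : Kbar) = 1 / (c : ℚ) := by
      rw [eq_div_iff hcne, mul_comm]; exact hπL'
    have hσπ0 : σ (0 : L) - τ (0 : L) = 0 := by simp
    rw [hσπ0, hv00]
    have hv1 : VGE v ((b : ℚ) / c) (σ αL - τ αL) := by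
      have h1 : VGE v ((b : ℚ) / c) (σ αL) := Or.inr hvσα.ge
      have h2 : VGE v ((b : ℚ) / c) (-(τ αL)) :=
        Or.inr (by rw [v_neg v hv_mul, hvτα])
      have h3 := VGE.add v hv_add h1 h2
      rwa [← sub_eq_add_neg] at h3
    rcases hv1 with h | h
    · exact absurd h hαLd0
    · have he : (1 : ℚ) / c + ((b : ℚ) - 1) / c = (b : ℚ) / c := by ring
      linarith
  · have hπv : v (ιL πL) = 1 / (c : ℚ) := by
      rw [eq_div_iff hcne, mul_comm]; exact hπL
    have hgenπ : Algebra.adjoin K {πL} = ⊤ :=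
      pi_gen v hv_mul hv_gal hv_int ιL hc hdeg hπ0 hπL
    have hπne : σ πL ≠ τ πL := fun h => hστ (algHom_ext_gen hgenπ h)
    have hπd0 : σ πL - τ πL ≠ 0 := sub_ne_zero.mpr hπne
    set w : L := αL / πL ^ b with hwdef
    have hπpow0 : πL ^ b ≠ 0 := pow_ne_zero _ hπ0
    have hw0 : w ≠ 0 := div_ne_zero hα0' hπpow0
    have hα_fact : αL = w * πL ^ b := (div_mul_cancel₀ _ hπpow0).symm
    have hιπ0 : ιL πL ≠ 0 := by simp [_root_.map_ne_zero, hπ0]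
    have hvw : v (ιL w) = 0 := by
      rw [hwdef, map_div₀, map_pow, v_div v hv_mul _ _ (by simp [_root_.map_ne_zero, hα0'])
        (pow_ne_zero _ hιπ0), v_pow v hv_mul _ hιπ0, hαL, hval, hπv]
      field_simp
      ring
    have hσπ0 : σ πL ≠ 0 := by simp [_root_.map_ne_zero, hπ0]
    have hτπ0 : τ πL ≠ 0 := by simp [_root_.map_ne_zero, hπ0]
    have hvσπ : v (σ πL) = 1 / (c : ℚ) := by rw [v_conj v hv_gal σ ιL, hπv]
    have hvτπ : v (τ πL) = 1 / (c : ℚ) := by rw [v_conj v hv_gal τ ιL, hπv]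
    have hvσw : v (σ w) = 0 := by rw [v_conj v hv_gal σ ιL, hvw]
    set d := σ πL - τ πL with hddef
    set r := v d with hrdef
    have hdecomp : σ αL - τ αL
        = σ w * ((∑ j ∈ range b, σ πL ^ j * τ πL ^ (b - 1 - j)) * d)
          + (σ w - τ w) * τ πL ^ b := by
      rw [hddef, geom_sum₂_mul]
      have h1 : σ αL = σ w * σ πL ^ b := by rw [hα_fact, map_mul, map_pow]
      have h2 : τ αL = τ w * τ πL ^ b := by rw [hα_fact, map_mul, map_pow]
      rw [h1, h2]
      ring
    have hgeom : VGE v (((b : ℚ) - 1) / c) (∑ j ∈ range b, σ πL ^ j * τ πL ^ (b - 1 - j)) := by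
      apply VGE.sum v hv_add
      intro j hj
      right
      rw [hv_mul _ _ (pow_ne_zero _ hσπ0) (pow_ne_zero _ hτπ0),
        v_pow v hv_mul _ hσπ0, v_pow v hv_mul _ hτπ0, hvσπ, hvτπ]
      have hjb : j + (b - 1 - j) = b - 1 := by
        have := Finset.mem_range.mp hj
        omega
      have hcast : ((j : ℚ) + ((b - 1 - j : ℕ) : ℚ)) = ((b : ℚ) - 1) := by
        have h1 : ((b - 1 : ℕ) : ℚ) = (b : ℚ) - 1 := by
          push_cast [Nat.cast_sub hb]
          ring
        rw [← h1]
        exact_mod_cast congrArg (fun n : ℕ => (n : ℚ)) hjb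
      calc ((b : ℚ) - 1) / c = ((j : ℚ) + ((b - 1 - j : ℕ) : ℚ)) * (1 / c) := by
            rw [hcast, mul_one_div]
        _ = (j : ℚ) * (1 / c) + ((b - 1 - j : ℕ) : ℚ) * (1 / c) := by ring
        _ ≤ _ := le_rfl
    have hT1 : VGE v (r + ((b : ℚ) - 1) / c)
        (σ w * ((∑ j ∈ range b, σ πL ^ j * τ πL ^ (b - 1 - j)) * d)) := by
      have hσw : VGE v 0 (σ w) := Or.inr hvσw.ge
      have hd : VGE v r d := Or.inr le_rfl
      have := VGE.mul v hv_mul hσw (VGE.mul v hv_mul hgeom hd)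
      have heq : (0 : ℚ) + (((b : ℚ) - 1) / c + r) = r + ((b : ℚ) - 1) / c := by ring
      rwa [heq] at this
    have hT2 : VGE v (r + ((b : ℚ) - 1) / c) ((σ w - τ w) * τ πL ^ b) := by
      have hdw : VGE v r (σ w - τ w) :=
        diff_vge v hv_mul hv_add hv_gal hv_int hv_res ιL hc hdeg hπ0 hπv σ τ w
          (Or.inr hvw.ge)
      have hπb : VGE v ((b : ℚ) / c) (τ πL ^ b) := Or.inr (by
        rw [v_pow v hv_mul _ hτπ0, hvτπ, mul_one_div])
      have hmul := VGE.mul v hv_mul hdw hπb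
      refine VGE.mono v hmul ?_
      have hb1 : ((b : ℚ) - 1) / c ≤ (b : ℚ) / c := by gcongr <;> linarith
      linarith
    have := VGE.add v hv_add hT1 hT2
    rw [← hdecomp] at this
    rcases this with h | h
    · exact absurd h hαLd0
    · exact h

end main


lemma nat_arith {b c : ℕ} (hb : 3 ≤ b) (hc : 3 ≤ c) (hcop : Nat.Coprime b c) :
    2 * (b / c + c - 1) ≤ (b - 1) * (c - 1) ∧
      ((b - 1) * (c - 1) = 2 * (b / c + c - 1) → b = 3 ∨ (b = 4 ∧ c = 3)) := by
  set q := b / c with hq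
  have hqc : q * c ≤ b := Nat.div_mul_le_self b c
  have h3q : 3 * q ≤ b := le_trans (by nlinarith) hqc
  rcases eq_or_ne b 3 with rfl | hb3
  · have hc4 : 4 ≤ c := by
      rcases eq_or_ne c 3 with rfl | hc3
      · simp [Nat.Coprime] at hcop
      · omega
    have hq0 : q = 0 := by rw [hq]; exact Nat.div_eq_of_lt (by omega)
    constructor
    · omega
    · intro _; exact Or.inl rfl
  rcases eq_or_ne b 4 with rfl | hb4
  · rcases eq_or_ne c 3 with rfl | hc3
    · have hq1 : q = 1 := by rw [hq]
      omega
    · have hc5 : 5 ≤ c := by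
        rcases eq_or_ne c 4 with rfl | hc4
        · simp [Nat.Coprime] at hcop
        · omega
      have hq0 : q = 0 := by rw [hq]; exact Nat.div_eq_of_lt (by omega)
      omega
  · have hb5 : 5 ≤ b := by omega
    have hstrict : 2 * (q + c - 1) < (b - 1) * (c - 1) := by
      obtain ⟨B, rfl⟩ : ∃ B, b = B + 5 := ⟨b - 5, by omega⟩
      obtain ⟨C, rfl⟩ : ∃ C, c = C + 3 := ⟨c - 3, by omega⟩
      have h1 : 3 * q ≤ B + 5 := h3q
      have h2 : 2 * (q + C + 2) < (B + 4) * (C + 2) := by nlinarith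
      calc 2 * (q + (C + 3) - 1) = 2 * (q + C + 2) := by omega
        _ < (B + 4) * (C + 2) := h2
        _ = (B + 5 - 1) * (C + 3 - 1) := by congr 1 <;> omega
    omega
end DB13

set_option maxHeartbeats 1000000 in
/-- Let `K` be a field, Henselian with respect to a discrete valuation
`ν_K` with algebraically closed residue field, with fixed algebraic closure `Kbar` and
(unique, Galois-invariant) extension `v` of `ν_K`, normalized so that a uniformizer
`πK` satisfies `v πK = 1` and `v` is `ℤ`-valued on `K`; algebraic closedness of the
residue field is expressed by `hv_res`.

Let `α ∈ K^sep` with `ν_K(α) = b/c` written in lowest terms (`b, c` coprime positive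
integers), and suppose `[K(α):K] = c` (realized by an abstract field `L = K(α)` with
`K`-embedding `ιL : L → Kbar` and generator `αL ↦ α`).  Let
`db := db_K(α) = Σ_{σ≠τ ∈ Hom_K(L,Kbar)} ν(σ(α) − τ(α)) − Σ_{σ≠τ} ν(σ(π_L) − τ(π_L))`
for a uniformizer `π_L` of `L`.  If `c = 2`, then `db ≥ b − 1`.  If `c ≥ 3` and
`b ≥ 3`, then `db ≥ 2(⌊b/c⌋ + c − 1)`, and equality can hold in this case only if
`b = 3` or `b/c = 4/3`. -/
theorem discriminant_bonus_length_one
    {K Kbar : Type*} [Field K] [Field Kbar] [Algebra K Kbar] [IsAlgClosure K Kbar]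
    (v : Kbar → ℚ)
    (hv_mul : ∀ x y : Kbar, x ≠ 0 → y ≠ 0 → v (x * y) = v x + v y)
    (hv_add : ∀ x y : Kbar, x ≠ 0 → y ≠ 0 → x + y ≠ 0 → min (v x) (v y) ≤ v (x + y))
    (hv_gal : ∀ (σ : Kbar ≃ₐ[K] Kbar) (x : Kbar), v (σ x) = v x)
    (hv_int : ∀ x : K, x ≠ 0 → ∃ n : ℤ, v (algebraMap K Kbar x) = (n : ℚ))
    (πK : K) (hπK : πK ≠ 0 ∧ v (algebraMap K Kbar πK) = 1)
    (hv_res : ∀ x : Kbar, x ≠ 0 → 0 ≤ v x →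
      ∃ η : K, x = algebraMap K Kbar η ∨ 0 < v (x - algebraMap K Kbar η))
    (α : Kbar) (hα0 : α ≠ 0) (hsep : (minpoly K α).Separable)
    (b c : ℕ) (hb : 0 < b) (hc : 0 < c) (hcop : Nat.Coprime b c)
    (hval : v α = (b : ℚ) / (c : ℚ))
    (L : Type*) [Field L] [Algebra K L] [FiniteDimensional K L]
    (ιL : L →ₐ[K] Kbar)
    (αL : L) (hαL : ιL αL = α) (hgen : Algebra.adjoin K {αL} = ⊤)
    (hdeg : Module.finrank K L = c)
    (πL : L) (hπL : (c : ℚ) * v (ιL πL) = 1)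
    (db : ℚ)
    (hdb : db =
      (∑ p ∈ (univ : Finset ((L →ₐ[K] Kbar) × (L →ₐ[K] Kbar))).filter
          (fun p => p.1 ≠ p.2), v (p.1 αL - p.2 αL))
      - (∑ p ∈ (univ : Finset ((L →ₐ[K] Kbar) × (L →ₐ[K] Kbar))).filter
          (fun p => p.1 ≠ p.2), v (p.1 πL - p.2 πL))) :
    (c = 2 → (b : ℚ) - 1 ≤ db) ∧
    (3 ≤ c → 3 ≤ b →
      ((2 * (b / c + c - 1) : ℕ) : ℚ) ≤ db ∧
      (db = ((2 * (b / c + c - 1) : ℕ) : ℚ) → b = 3 ∨ (b = 4 ∧ c = 3))) := by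
  haveI : Algebra.IsSeparable K L := DB13.sep_of_gen ιL αL (by rw [hαL]; exact hsep) hgen
  haveI : IsAlgClosed Kbar := IsAlgClosure.isAlgClosed K
  have hcq : (0 : ℚ) < (c : ℚ) := by positivity
  have hcne : (c : ℚ) ≠ 0 := ne_of_gt hcq
  have hpair : ∀ p : (L →ₐ[K] Kbar) × (L →ₐ[K] Kbar), p.1 ≠ p.2 →
      v (p.1 πL - p.2 πL) + ((b : ℚ) - 1) / c ≤ v (p.1 αL - p.2 αL) := fun p hp =>
    DB13.pair_bound v hv_mul hv_add hv_gal hv_int hv_res ιL hc hdeg hα0 hb hval hαL hgen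
      hπL p.1 p.2 hp
  have hcard : ((univ : Finset ((L →ₐ[K] Kbar) × (L →ₐ[K] Kbar))).filter
      (fun p => p.1 ≠ p.2)).card = c * c - c := by
    have h1 : ((univ : Finset ((L →ₐ[K] Kbar) × (L →ₐ[K] Kbar))).filter
        (fun p => p.1 ≠ p.2)) = (univ : Finset (L →ₐ[K] Kbar)).offDiag := by
      ext p; simp [Finset.mem_offDiag]
    rw [h1, Finset.offDiag_card, Finset.card_univ, AlgHom.card K L Kbar, hdeg]
  have hmain : ((b : ℚ) - 1) * ((c : ℚ) - 1) ≤ db := by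
    rw [hdb, ← Finset.sum_sub_distrib]
    have hsum := Finset.card_nsmul_le_sum
      ((univ : Finset ((L →ₐ[K] Kbar) × (L →ₐ[K] Kbar))).filter (fun p => p.1 ≠ p.2))
      (fun p => v (p.1 αL - p.2 αL) - v (p.1 πL - p.2 πL)) (((b : ℚ) - 1) / c)
      (fun p hp => by
        have := hpair p (Finset.mem_filter.mp hp).2
        linarith)
    rw [hcard] at hsum
    refine le_trans (le_of_eq ?_) hsum
    rw [nsmul_eq_mul]
    have hle : c ≤ c * c := Nat.le_mul_of_pos_left c hc
    rw [Nat.cast_sub hle]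
    push_cast
    field_simp
  constructor
  · intro h2
    subst h2
    norm_num at hmain
    linarith
  · intro hc3 hb3
    obtain ⟨hN, himp⟩ := DB13.nat_arith hb3 hc3 hcop
    have hcast : (((b - 1) * (c - 1) : ℕ) : ℚ) = ((b : ℚ) - 1) * ((c : ℚ) - 1) := by
      push_cast [Nat.cast_sub (by omega : 1 ≤ b), Nat.cast_sub (by omega : 1 ≤ c)]
      ring
    have hle : ((2 * (b / c + c - 1) : ℕ) : ℚ) ≤ db := by
      calc ((2 * (b / c + c - 1) : ℕ) : ℚ) ≤ (((b - 1) * (c - 1) : ℕ) : ℚ) := by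
            exact_mod_cast hN
        _ = ((b : ℚ) - 1) * ((c : ℚ) - 1) := hcast
        _ ≤ db := hmain
    refine ⟨hle, ?_⟩
    intro heq
    by_contra hcon
    push_neg at hcon
    have hne : (b - 1) * (c - 1) ≠ 2 * (b / c + c - 1) := by
      intro h
      rcases himp h with h1 | h2
      · exact hcon.1 h1
      · exact hcon.2 h2.1 h2.2
    have hstrict : 2 * (b / c + c - 1) < (b - 1) * (c - 1) := lt_of_le_of_ne hN (Ne.symm hne)
    have : ((2 * (b / c + c - 1) : ℕ) : ℚ) < ((b : ℚ) - 1) * ((c : ℚ) - 1) := by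
      rw [← hcast]
      exact_mod_cast hstrict
    rw [← heq] at this
    linarith
end
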